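/- arXiv:1508.03455 — 9 statements merged into one kernel-verified Lean document; each statement's English description precedes it below -/
import Mathlib

section
/- In a stochastic game, for every potential vector x ∈ ℝ^V, every subset S ⊆ V, every real δ ≥ 0, and every position v ∉ S, the local values satisfy m^v(x) ≤ m^v(x − δ·e_S) ≤ m^v(x) + δ · max_{k∈K^v, ℓ∈L^v} ∑_{u∈S} p^{vu}_{kℓ}. -/
open Matrix

/-- The value of a finite zero-sum matrix game:
`Val(A) = max_{α ∈ Δ(K)} min_{β ∈ Δ(L)} αᵀ A β`. -/
noncomputable def matVal {K L : Type*} [Fintype K] [Fintype L]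
    (A : Matrix K L ℝ) : ℝ :=
  ⨆ α : stdSimplex ℝ K, ⨅ β : stdSimplex ℝ L, ∑ k, ∑ l, α.1 k * A k l * β.1 l

section aux

variable {K L : Type*} [Fintype K] [Fintype L] [Nonempty K] [Nonempty L]

instance : Nonempty (stdSimplex ℝ K) := by
  classical
  exact ⟨⟨Pi.single (Classical.arbitrary K) 1, single_mem_stdSimplex ℝ _⟩⟩

lemma simplex_weight_sum (α : stdSimplex ℝ K) (β : stdSimplex ℝ L) (c : ℝ) :
    ∑ k, ∑ l, α.1 k * c * β.1 l = c := by
  have h : ∀ k, ∑ l, α.1 k * c * β.1 l = α.1 k * c := by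
    intro k
    rw [← Finset.mul_sum, β.2.2, mul_one]
  simp_rw [h]
  rw [← Finset.sum_mul, α.2.2, one_mul]

lemma payoff_mono (A B : Matrix K L ℝ) (c : ℝ) (h : ∀ k l, A k l ≤ B k l + c)
    (α : stdSimplex ℝ K) (β : stdSimplex ℝ L) :
    ∑ k, ∑ l, α.1 k * A k l * β.1 l ≤ (∑ k, ∑ l, α.1 k * B k l * β.1 l) + c := by
  have key : ∑ k, ∑ l, α.1 k * A k l * β.1 l ≤
      ∑ k, ∑ l, α.1 k * (B k l + c) * β.1 l := by
    refine Finset.sum_le_sum fun k _ => Finset.sum_le_sum fun l _ => ?_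
    have h1 := α.2.1 k
    have h2 := β.2.1 l
    have h3 := h k l
    exact mul_le_mul_of_nonneg_right (mul_le_mul_of_nonneg_left h3 h1) h2
  have split : ∑ k, ∑ l, α.1 k * (B k l + c) * β.1 l =
      (∑ k, ∑ l, α.1 k * B k l * β.1 l) + ∑ k, ∑ l, α.1 k * c * β.1 l := by
    rw [← Finset.sum_add_distrib]
    refine Finset.sum_congr rfl fun k _ => ?_
    rw [← Finset.sum_add_distrib]
    refine Finset.sum_congr rfl fun l _ => ?_
    ring
  rw [split, simplex_weight_sum] at key
  exact key

lemma payoff_le_bound (A : Matrix K L ℝ) (b : ℝ) (hb : ∀ k l, A k l ≤ b)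
    (α : stdSimplex ℝ K) (β : stdSimplex ℝ L) :
    ∑ k, ∑ l, α.1 k * A k l * β.1 l ≤ b := by
  have := payoff_mono A 0 b (by simpa using hb) α β
  simpa [simplex_weight_sum α β 0] using this

lemma bound_le_payoff (A : Matrix K L ℝ) (b : ℝ) (hb : ∀ k l, b ≤ A k l)
    (α : stdSimplex ℝ K) (β : stdSimplex ℝ L) :
    b ≤ ∑ k, ∑ l, α.1 k * A k l * β.1 l := by
  have := payoff_mono 0 A (-b) (by intro k l; simpa using hb k l) α β
  have h0 : ∑ k, ∑ l, α.1 k * (0 : Matrix K L ℝ) k l * β.1 l = 0 := by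
    simpa using simplex_weight_sum α β 0
  rw [h0] at this
  linarith

lemma matVal_le_add (A B : Matrix K L ℝ) (c : ℝ) (h : ∀ k l, A k l ≤ B k l + c) :
    matVal A ≤ matVal B + c := by
  classical
  obtain ⟨mA, hmA⟩ : ∃ m, ∀ k l, m ≤ A k l :=
    ⟨(Finset.univ : Finset (K × L)).inf' Finset.univ_nonempty (fun kl => A kl.1 kl.2),
      fun k l => Finset.inf'_le _ (Finset.mem_univ (k, l))⟩
  obtain ⟨mB, hmB⟩ : ∃ m, ∀ k l, m ≤ B k l :=
    ⟨(Finset.univ : Finset (K × L)).inf' Finset.univ_nonempty (fun kl => B kl.1 kl.2),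
      fun k l => Finset.inf'_le (fun kl : K × L => B kl.1 kl.2) (Finset.mem_univ (k, l))⟩
  obtain ⟨MB, hMB⟩ : ∃ M, ∀ k l, B k l ≤ M :=
    ⟨(Finset.univ : Finset (K × L)).sup' Finset.univ_nonempty (fun kl => B kl.1 kl.2),
      fun k l => Finset.le_sup' (fun kl : K × L => B kl.1 kl.2) (Finset.mem_univ (k, l))⟩
  unfold matVal
  refine ciSup_le fun α => ?_
  have hbddA : BddBelow (Set.range fun β : stdSimplex ℝ L =>
      ∑ k, ∑ l, α.1 k * A k l * β.1 l) := by
    refine ⟨mA, ?_⟩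
    rintro y ⟨β, rfl⟩
    exact bound_le_payoff A mA hmA α β
  have h1 : (⨅ β : stdSimplex ℝ L, ∑ k, ∑ l, α.1 k * A k l * β.1 l) ≤
      (⨅ β : stdSimplex ℝ L, ∑ k, ∑ l, α.1 k * B k l * β.1 l) + c := by
    have hstep : ∀ β : stdSimplex ℝ L,
        (⨅ β : stdSimplex ℝ L, ∑ k, ∑ l, α.1 k * A k l * β.1 l) - c ≤
          ∑ k, ∑ l, α.1 k * B k l * β.1 l := by
      intro β
      have h4 := ciInf_le hbddA β
      have h5 := payoff_mono A B c h α β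
      linarith
    have := le_ciInf hstep
    linarith
  have h2 : (⨅ β : stdSimplex ℝ L, ∑ k, ∑ l, α.1 k * B k l * β.1 l) ≤
      ⨆ α : stdSimplex ℝ K, ⨅ β : stdSimplex ℝ L, ∑ k, ∑ l, α.1 k * B k l * β.1 l := by
    refine le_ciSup (f := fun α : stdSimplex ℝ K =>
      ⨅ β : stdSimplex ℝ L, ∑ k, ∑ l, α.1 k * B k l * β.1 l) ⟨MB, ?_⟩ α
    rintro y ⟨α', rfl⟩
    exact le_trans (ciInf_le ⟨mB, by
      rintro z ⟨β, rfl⟩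
      exact bound_le_payoff B mB hmB α' β⟩ (Classical.arbitrary _)) (payoff_le_bound B MB hMB α' _)
  linarith

end aux

variable {V : Type*} [Fintype V] [DecidableEq V] [Nonempty V]
  {K L : V → Type*} [∀ v, Fintype (K v)] [∀ v, Nonempty (K v)]
  [∀ v, Fintype (L v)] [∀ v, Nonempty (L v)]

/-- The potential-transformed local reward matrix `A^v(x)` of a stochastic game
with transition probabilities `p` and rewards `r`:
`a^v_{kℓ}(x) = ∑_u p^{vu}_{kℓ} (r^{vu}_{kℓ} + x^v − x^u)`. -/
noncomputable def locMat (p r : ∀ v : V, K v → L v → V → ℝ) (x : V → ℝ) (v : V) :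
    Matrix (K v) (L v) ℝ :=
  Matrix.of fun k l => ∑ u, p v k l u * (r v k l u + x v - x u)

/-- The local value `m^v(x) = Val(A^v(x))`. -/
noncomputable def locVal (p r : ∀ v : V, K v → L v → V → ℝ) (x : V → ℝ) (v : V) : ℝ :=
  matVal (locMat p r x v)

/-- for every potential `x`, subset `S ⊆ V`, `δ ≥ 0` and `v ∉ S`:
`m^v(x) ≤ m^v(x − δ e_S) ≤ m^v(x) + δ · max_{k,ℓ} ∑_{u ∈ S} p^{vu}_{kℓ}`. -/
theorem locVal_pump_vertex_not_in_S
    (p r : ∀ v : V, K v → L v → V → ℝ)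
    (hp0 : ∀ v k l u, 0 ≤ p v k l u) (hp1 : ∀ v k l, ∑ u, p v k l u = 1)
    (x : V → ℝ) (S : Finset V) (δ : ℝ) (hδ : 0 ≤ δ) (v : V) (hv : v ∉ S) :
    locVal p r x v ≤ locVal p r (fun u => x u - δ * (if u ∈ S then 1 else 0)) v ∧
    locVal p r (fun u => x u - δ * (if u ∈ S then 1 else 0)) v ≤
      locVal p r x v +
        δ * ((Finset.univ : Finset (K v × L v)).sup' Finset.univ_nonempty
          (fun kl => ∑ u ∈ S, p v kl.1 kl.2 u)) := by
  classical
  set x' : V → ℝ := fun u => x u - δ * (if u ∈ S then 1 else 0) with hx'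
  have key : ∀ k l, locMat p r x' v k l =
      locMat p r x v k l + δ * ∑ u ∈ S, p v k l u := by
    intro k l
    simp only [locMat, Matrix.of_apply, hx']
    have hv' : x v - δ * (if v ∈ S then 1 else 0) = x v := by simp [hv]
    rw [hv']
    have : ∀ u, p v k l u * (r v k l u + x v - (x u - δ * (if u ∈ S then 1 else 0))) =
        p v k l u * (r v k l u + x v - x u) + δ * (if u ∈ S then p v k l u else 0) := by
      intro u
      by_cases hu : u ∈ S <;> simp [hu] <;> ring
    simp_rw [this, Finset.sum_add_distrib, ← Finset.mul_sum, Finset.sum_ite_mem,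
      Finset.univ_inter]
  constructor
  · have h := matVal_le_add (locMat p r x v) (locMat p r x' v) 0 (fun k l => by
      rw [key k l]
      have : 0 ≤ δ * ∑ u ∈ S, p v k l u :=
        mul_nonneg hδ (Finset.sum_nonneg fun u _ => hp0 v k l u)
      linarith)
    simpa [locVal] using h
  · refine matVal_le_add _ _ _ fun k l => ?_
    rw [key k l]
    have hle : ∑ u ∈ S, p v k l u ≤
        (Finset.univ : Finset (K v × L v)).sup' Finset.univ_nonempty
          (fun kl => ∑ u ∈ S, p v kl.1 kl.2 u) :=
      Finset.le_sup' (fun kl : K v × L v => ∑ u ∈ S, p v kl.1 kl.2 u) (Finset.mem_univ (k, l))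
    nlinarith
end

section
/- For the pumping sequence (x_τ)_{τ≥0} defined from any initial x_0 ∈ ℝ^V, the top and bottom sets are monotone: T_{τ+1} ⊆ T_τ and B_{τ+1} ⊆ B_τ for every τ ≥ 0; consequently M_τ := V ∖ (T_τ ∪ B_τ) satisfies M_{τ+1} ⊇ M_τ. -/
/- Abstract pumping setting: `V` is a finite nonempty set and `m^v : ℝ^V → ℝ`
are functions satisfying the monotonicity and Lipschitz properties (i)-(iii)
with respect to reductions of potentials on a subset `S` (with characteristic
vector `e_S = S.indicator 1`). Starting from `x₀`, the pumping sequence is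
`x_{τ+1} = x_τ − δ·e_{P_τ}` where `P_τ = {v : m^v(x_τ) ≥ m⁻ + 2δ}`,
`δ = (m⁺ − m⁻)/4`, and the top/bottom sets are
`T_τ = {v : m^v(x_τ) ≥ m⁻ + 3δ}`, `B_τ = {v : m^v(x_τ) < m⁻ + δ}`. -/

/-- along the pumping sequence the top and bottom sets are
monotone: `T_{τ+1} ⊆ T_τ`, `B_{τ+1} ⊆ B_τ`, and hence
`M_τ = V ∖ (T_τ ∪ B_τ)` satisfies `M_τ ⊆ M_{τ+1}`. -/
theorem pumping_top_bottom_monotone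
    {V : Type*} [Fintype V] [Nonempty V]
    (m : V → (V → ℝ) → ℝ)
    (h_i : ∀ (x : V → ℝ) (S : Set V), ∀ v ∈ S,
      AntitoneOn (fun δ : ℝ => m v (fun u => x u - δ * S.indicator 1 u)) (Set.Ici 0))
    (h_ii : ∀ (x : V → ℝ) (S : Set V), ∀ v ∉ S,
      MonotoneOn (fun δ : ℝ => m v (fun u => x u - δ * S.indicator 1 u)) (Set.Ici 0))
    (h_iii : ∀ (x : V → ℝ) (S : Set V) (δ : ℝ), 0 ≤ δ → ∀ v,
      |m v x - m v (fun u => x u - δ * S.indicator 1 u)| ≤ δ)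
    (x0 : V → ℝ) (mlo mhi δ : ℝ)
    (hmlo : mlo = Finset.univ.inf' Finset.univ_nonempty fun v => m v x0)
    (hmhi : mhi = Finset.univ.sup' Finset.univ_nonempty fun v => m v x0)
    (hδ : δ = (mhi - mlo) / 4)
    (x : ℕ → V → ℝ) (hx0 : x 0 = x0)
    (P T B M : ℕ → Set V)
    (hP : ∀ τ, P τ = {v | mlo + 2 * δ ≤ m v (x τ)})
    (hx : ∀ τ, x (τ + 1) = fun u => x τ u - δ * (P τ).indicator 1 u)
    (hT : ∀ τ, T τ = {v | mlo + 3 * δ ≤ m v (x τ)})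
    (hB : ∀ τ, B τ = {v | m v (x τ) < mlo + δ})
    (hM : ∀ τ, M τ = (T τ ∪ B τ)ᶜ) :
    ∀ τ, T (τ + 1) ⊆ T τ ∧ B (τ + 1) ⊆ B τ ∧ M τ ⊆ M (τ + 1) := by
  have hml : mlo ≤ mhi := by
    subst hmlo hmhi
    have h1 := Finset.inf'_le (f := fun v => m v x0) (Finset.mem_univ (Classical.arbitrary V))
    have h2 := Finset.le_sup' (f := fun v => m v x0) (Finset.mem_univ (Classical.arbitrary V))
    exact le_trans h1 h2
  have hδ0 : 0 ≤ δ := by rw [hδ]; linarith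
  intro τ
  have hTsub : T (τ + 1) ⊆ T τ := by
    intro v hv
    rw [hT] at hv ⊢
    simp only [Set.mem_setOf_eq] at hv ⊢
    have hlip := abs_le.mp (h_iii (x τ) (P τ) δ hδ0 v)
    rw [show (fun u => x τ u - δ * (P τ).indicator 1 u) = x (τ + 1) from (hx τ).symm] at hlip
    have hvP : v ∈ P τ := by
      rw [hP]; simp only [Set.mem_setOf_eq]; linarith [hlip.1, hlip.2]
    have hmono := h_i (x τ) (P τ) v hvP Set.self_mem_Ici (Set.mem_Ici.mpr hδ0) hδ0
    simp only [zero_mul, sub_zero] at hmono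
    rw [show (fun u => x τ u - δ * (P τ).indicator 1 u) = x (τ + 1) from (hx τ).symm] at hmono
    have : m v (x (τ + 1)) ≤ m v (x τ) := hmono
    linarith
  have hBsub : B (τ + 1) ⊆ B τ := by
    intro v hv
    rw [hB] at hv ⊢
    simp only [Set.mem_setOf_eq] at hv ⊢
    have hlip := abs_le.mp (h_iii (x τ) (P τ) δ hδ0 v)
    rw [show (fun u => x τ u - δ * (P τ).indicator 1 u) = x (τ + 1) from (hx τ).symm] at hlip
    have hvP : v ∉ P τ := by
      rw [hP]; simp only [Set.mem_setOf_eq]; push_neg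
      linarith [hlip.1, hlip.2]
    have hmono := h_ii (x τ) (P τ) v hvP Set.self_mem_Ici (Set.mem_Ici.mpr hδ0) hδ0
    simp only [zero_mul, sub_zero] at hmono
    rw [show (fun u => x τ u - δ * (P τ).indicator 1 u) = x (τ + 1) from (hx τ).symm] at hmono
    have : m v (x τ) ≤ m v (x (τ + 1)) := hmono
    linarith
  refine ⟨hTsub, hBsub, ?_⟩
  rw [hM τ, hM (τ + 1)]
  exact Set.compl_subset_compl.mpr (Set.union_subset_union hTsub hBsub)
end

section
/- For the pumping sequence (x_τ)_{τ≥0} defined from any initial x_0 ∈ ℝ^V, either T_τ = ∅ or B_τ = ∅ for some finite τ, or there exist nonempty disjoint subsets I, F ⊆ V and a threshold τ_0 such that: T_τ ⊆ I and B_τ ⊆ F for all τ ≥ τ_0; (a) for all τ ≥ τ_0, m^v(x_τ) ≥ m⁻ + 2δ for all v ∈ I and m^v(x_τ) < m⁻ + 2δ for all v ∈ F; and for every real Δ ≥ 0 there exists a finite index τ(Δ) ≥ τ_0 such that for all τ ≥ τ(Δ): (b) x_τ^u − x_τ^v ≥ Δ for all v ∈ I and u ∉ I, and (c) x_τ^v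 − x_τ^u ≥ Δ for all v ∈ F and u ∉ F. -/
open Filter

private lemma stabilize' {V : Type*} [Fintype V] (S : ℕ → Set V)
    (hS : ∀ τ, S (τ + 1) ⊆ S τ) : ∃ τ1, ∀ τ ≥ τ1, S τ = S τ1 := by
  classical
  have hchain : ∀ σ τ, σ ≤ τ → S τ ⊆ S σ := by
    intro σ τ h
    induction τ, h using Nat.le_induction with
    | base => exact subset_rfl
    | succ n hn ih => exact (hS n).trans ih
  have hne : (Set.range fun τ => (S τ).toFinset.card).Nonempty := ⟨_, 0, rfl⟩
  obtain ⟨τ1, hτ1⟩ := Nat.sInf_mem hne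
  refine ⟨τ1, fun τ hτ => ?_⟩
  have hsub : S τ ⊆ S τ1 := hchain τ1 τ hτ
  have hcard : (S τ1).toFinset.card ≤ (S τ).toFinset.card := by
    simp only at hτ1; rw [hτ1]; exact Nat.sInf_le ⟨τ, rfl⟩
  have := Finset.eq_of_subset_of_card_le (Set.toFinset_subset_toFinset.mpr hsub) hcard
  exact Set.toFinset_inj.mp this

private lemma grow' (g : ℕ → ℝ) (δ : ℝ) (hδ : 0 < δ) (τ0 : ℕ)
    (hmono : ∀ τ, τ0 ≤ τ → g τ ≤ g (τ + 1))
    (hinf : ∀ σ, ∃ τ, σ ≤ τ ∧ τ0 ≤ τ ∧ g τ + δ ≤ g (τ + 1)) :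
    ∀ Δ : ℝ, ∀ᶠ τ in atTop, Δ ≤ g τ := by
  have hchain : ∀ a b, τ0 ≤ a → a ≤ b → g a ≤ g b := by
    intro a b ha h
    induction b, h using Nat.le_induction with
    | base => exact le_rfl
    | succ n hn ih => exact ih.trans (hmono n (ha.trans hn))
  have hstep : ∀ n : ℕ, ∃ τ, τ0 ≤ τ ∧ g τ0 + n * δ ≤ g τ := by
    intro n
    induction n with
    | zero => exact ⟨τ0, le_rfl, by simp⟩
    | succ k ih =>
      obtain ⟨τ, hτ0, hg⟩ := ih
      obtain ⟨τ', hττ', hτ0', hg'⟩ := hinf τ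
      refine ⟨τ' + 1, by omega, ?_⟩
      have h1 : g τ ≤ g τ' := hchain τ τ' hτ0 hττ'
      push_cast
      linarith
  intro Δ
  obtain ⟨n, hn⟩ := exists_nat_ge ((Δ - g τ0) / δ)
  have hΔn : Δ ≤ g τ0 + n * δ := by
    have := (div_le_iff₀ hδ).mp hn
    linarith
  obtain ⟨τ, hτ0, hg⟩ := hstep n
  filter_upwards [eventually_ge_atTop τ] with τ' hτ'
  exact hΔn.trans (hg.trans (hchain τ τ' hτ0 hτ'))



/- Abstract pumping setting: `V` is a finite nonempty set and `m^v : ℝ^V → ℝ`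
are functions satisfying the monotonicity and Lipschitz properties (i)-(iii)
with respect to reductions of potentials on a subset `S` (with characteristic
vector `e_S = S.indicator 1`). Starting from `x₀`, the pumping sequence is
`x_{τ+1} = x_τ − δ·e_{P_τ}` where `P_τ = {v : m^v(x_τ) ≥ m⁻ + 2δ}`,
`δ = (m⁺ − m⁻)/4`, and the top/bottom sets are
`T_τ = {v : m^v(x_τ) ≥ m⁻ + 3δ}`, `B_τ = {v : m^v(x_τ) < m⁻ + δ}`. -/

/-- along the pumping sequence, either `T_τ = ∅` or `B_τ = ∅` for
some finite `τ`, or there are nonempty disjoint sets `I ⊇ T_τ`, `F ⊇ B_τ` and a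
threshold `τ₀` such that (a) for all `τ ≥ τ₀`, `m^v(x_τ) ≥ m⁻ + 2δ` on `I` and
`m^v(x_τ) < m⁻ + 2δ` on `F`, and for every `Δ ≥ 0` there is `τ(Δ) ≥ τ₀` with
(b) `x_τ^u − x_τ^v ≥ Δ` for `v ∈ I`, `u ∉ I` and (c) `x_τ^v − x_τ^u ≥ Δ` for
`v ∈ F`, `u ∉ F`, for all `τ ≥ τ(Δ)`. -/
theorem pumping_dichotomy
    {V : Type*} [Fintype V] [Nonempty V]
    (m : V → (V → ℝ) → ℝ)
    (h_i : ∀ (x : V → ℝ) (S : Set V), ∀ v ∈ S,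
      AntitoneOn (fun δ : ℝ => m v (fun u => x u - δ * S.indicator 1 u)) (Set.Ici 0))
    (h_ii : ∀ (x : V → ℝ) (S : Set V), ∀ v ∉ S,
      MonotoneOn (fun δ : ℝ => m v (fun u => x u - δ * S.indicator 1 u)) (Set.Ici 0))
    (h_iii : ∀ (x : V → ℝ) (S : Set V) (δ : ℝ), 0 ≤ δ → ∀ v,
      |m v x - m v (fun u => x u - δ * S.indicator 1 u)| ≤ δ)
    (x0 : V → ℝ) (mlo mhi δ : ℝ)
    (hmlo : mlo = Finset.univ.inf' Finset.univ_nonempty fun v => m v x0)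
    (hmhi : mhi = Finset.univ.sup' Finset.univ_nonempty fun v => m v x0)
    (hδ : δ = (mhi - mlo) / 4)
    (x : ℕ → V → ℝ) (hx0 : x 0 = x0)
    (P T B : ℕ → Set V)
    (hP : ∀ τ, P τ = {v | mlo + 2 * δ ≤ m v (x τ)})
    (hx : ∀ τ, x (τ + 1) = fun u => x τ u - δ * (P τ).indicator 1 u)
    (hT : ∀ τ, T τ = {v | mlo + 3 * δ ≤ m v (x τ)})
    (hB : ∀ τ, B τ = {v | m v (x τ) < mlo + δ}) :
    (∃ τ, T τ = ∅ ∨ B τ = ∅) ∨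
    ∃ (I F : Set V) (τ0 : ℕ), I.Nonempty ∧ F.Nonempty ∧ Disjoint I F ∧
      (∀ τ ≥ τ0, T τ ⊆ I ∧ B τ ⊆ F ∧
        (∀ v ∈ I, mlo + 2 * δ ≤ m v (x τ)) ∧
        (∀ v ∈ F, m v (x τ) < mlo + 2 * δ)) ∧
      (∀ Δ : ℝ, 0 ≤ Δ → ∃ τΔ, τ0 ≤ τΔ ∧ ∀ τ ≥ τΔ,
        (∀ v ∈ I, ∀ u ∉ I, Δ ≤ x τ u - x τ v) ∧
        (∀ v ∈ F, ∀ u ∉ F, Δ ≤ x τ v - x τ u)) := by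
  classical
  by_cases hδpos : 0 < δ
  · -- main case
    by_cases hTB : ∃ τ, T τ = ∅ ∨ B τ = ∅
    · exact Or.inl hTB
    push_neg at hTB
    right
    -- step lemmas
    have hstep_le : ∀ τ, ∀ v ∈ P τ, m v (x (τ + 1)) ≤ m v (x τ) := by
      intro τ v hv
      have h := h_i (x τ) (P τ) v hv Set.self_mem_Ici (Set.mem_Ici.mpr hδpos.le) hδpos.le
      rw [hx τ]
      simpa using h
    have hstep_ge : ∀ τ, ∀ v ∉ P τ, m v (x τ) ≤ m v (x (τ + 1)) := by
      intro τ v hv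
      have h := h_ii (x τ) (P τ) v hv Set.self_mem_Ici (Set.mem_Ici.mpr hδpos.le) hδpos.le
      rw [hx τ]
      simpa using h
    have hstep_abs : ∀ τ v, |m v (x τ) - m v (x (τ + 1))| ≤ δ := by
      intro τ v
      have h := h_iii (x τ) (P τ) δ hδpos.le v
      rw [hx τ]
      exact h
    -- monotonicity of T and B
    have hTmono : ∀ τ, T (τ + 1) ⊆ T τ := by
      intro τ v hv
      rw [hT] at hv ⊢
      simp only [Set.mem_setOf_eq] at hv ⊢
      by_cases hvP : v ∈ P τ
      · exact hv.trans (hstep_le τ v hvP)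
      · exfalso
        have h1 : ¬ (mlo + 2 * δ ≤ m v (x τ)) := by
          rw [hP] at hvP; exact hvP
        have h2 := (abs_le.mp (hstep_abs τ v)).1
        push_neg at h1
        linarith
    have hBmono : ∀ τ, B (τ + 1) ⊆ B τ := by
      intro τ v hv
      rw [hB] at hv ⊢
      simp only [Set.mem_setOf_eq] at hv ⊢
      by_cases hvP : v ∈ P τ
      · exfalso
        have h1 : mlo + 2 * δ ≤ m v (x τ) := by rw [hP] at hvP; exact hvP
        have h2 := (abs_le.mp (hstep_abs τ v)).2
        linarith
      · exact lt_of_le_of_lt (hstep_ge τ v hvP) hv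
    obtain ⟨τT, hτT⟩ := stabilize' T hTmono
    obtain ⟨τB, hτB⟩ := stabilize' B hBmono
    set I : Set V := {v | ∃ σ, ∀ τ ≥ σ, v ∈ P τ} with hI
    set F : Set V := {v | ∃ σ, ∀ τ ≥ σ, v ∉ P τ} with hF
    -- uniform threshold
    have hIev : ∀ᶠ τ in atTop, ∀ v, v ∈ I → v ∈ P τ := by
      rw [eventually_all]
      intro v
      by_cases hv : v ∈ I
      · obtain ⟨σ, hσ⟩ := hv
        exact (eventually_atTop.mpr ⟨σ, hσ⟩).mono fun τ h _ => h
      · exact Eventually.of_forall fun τ h => absurd h hv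
    have hFev : ∀ᶠ τ in atTop, ∀ v, v ∈ F → v ∉ P τ := by
      rw [eventually_all]
      intro v
      by_cases hv : v ∈ F
      · obtain ⟨σ, hσ⟩ := hv
        exact (eventually_atTop.mpr ⟨σ, hσ⟩).mono fun τ h _ => h
      · exact Eventually.of_forall fun τ h => absurd h hv
    obtain ⟨a, ha⟩ := eventually_atTop.mp (hIev.and hFev)
    set τ0 := max a (max τT τB) with hτ0def
    have hIP : ∀ τ ≥ τ0, ∀ v ∈ I, v ∈ P τ := fun τ hτ v hv =>
      (ha τ (le_trans (le_max_left _ _) hτ)).1 v hv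
    have hFP : ∀ τ ≥ τ0, ∀ v ∈ F, v ∉ P τ := fun τ hτ v hv =>
      (ha τ (le_trans (le_max_left _ _) hτ)).2 v hv
    -- T eventually ⊆ I, B eventually ⊆ F
    have hTI : ∀ τ ≥ τT, T τ ⊆ I := by
      intro τ hτ v hv
      rw [hτT τ hτ] at hv
      refine ⟨τT, fun σ hσ => ?_⟩
      have hvσ : v ∈ T σ := by rw [hτT σ hσ]; exact hv
      rw [hT] at hvσ
      rw [hP]
      simp only [Set.mem_setOf_eq] at hvσ ⊢
      linarith
    have hBF : ∀ τ ≥ τB, B τ ⊆ F := by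
      intro τ hτ v hv
      rw [hτB τ hτ] at hv
      refine ⟨τB, fun σ hσ => ?_⟩
      have hvσ : v ∈ B σ := by rw [hτB σ hσ]; exact hv
      rw [hB] at hvσ
      rw [hP]
      simp only [Set.mem_setOf_eq] at hvσ ⊢
      push_neg
      linarith
    have hτTτ0 : τT ≤ τ0 := le_trans (le_max_left _ _) (le_max_right _ _)
    have hτBτ0 : τB ≤ τ0 := le_trans (le_max_right _ _) (le_max_right _ _)
    have hIne : I.Nonempty := by
      obtain ⟨v, hv⟩ := (hTB τT).1
      exact ⟨v, hTI τT le_rfl hv⟩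
    have hFne : F.Nonempty := by
      obtain ⟨v, hv⟩ := (hTB τB).2
      exact ⟨v, hBF τB le_rfl hv⟩
    have hdisj : Disjoint I F := by
      rw [Set.disjoint_left]
      intro v hvI hvF
      exact hFP τ0 le_rfl v hvF (hIP τ0 le_rfl v hvI)
    -- potential step computations
    have hxI : ∀ τ ≥ τ0, ∀ v ∈ I, x (τ + 1) v = x τ v - δ := by
      intro τ hτ v hv
      rw [hx τ]
      simp [Set.indicator_of_mem (hIP τ hτ v hv)]
    have hxF : ∀ τ ≥ τ0, ∀ v ∈ F, x (τ + 1) v = x τ v := by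
      intro τ hτ v hv
      rw [hx τ]
      simp [Set.indicator_of_notMem (hFP τ hτ v hv)]
    have hxin : ∀ τ, ∀ u ∈ P τ, x (τ + 1) u = x τ u - δ := by
      intro τ u hu
      rw [hx τ]
      simp [Set.indicator_of_mem hu]
    have hxout : ∀ τ, ∀ u, u ∉ P τ → x (τ + 1) u = x τ u := by
      intro τ u hu
      rw [hx τ]
      simp [Set.indicator_of_notMem hu]
    refine ⟨I, F, τ0, hIne, hFne, hdisj, ?_, ?_⟩
    · intro τ hτ
      refine ⟨hTI τ (hτTτ0.trans hτ), hBF τ (hτBτ0.trans hτ), ?_, ?_⟩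
      · intro v hv
        have := hIP τ hτ v hv
        rw [hP] at this
        exact this
      · intro v hv
        have := hFP τ hτ v hv
        rw [hP] at this
        simp only [Set.mem_setOf_eq] at this
        push_neg at this
        exact this
    · intro Δ _
      have hpair1 : ∀ v u, v ∈ I → u ∉ I → ∀ᶠ τ in atTop, Δ ≤ x τ u - x τ v := by
        intro v u hv hu
        refine grow' (fun τ => x τ u - x τ v) δ hδpos τ0 ?_ ?_ Δ
        · intro τ hτ
          have h1 := hxI τ hτ v hv
          show x τ u - x τ v ≤ x (τ + 1) u - x (τ + 1) v
          by_cases huP : u ∈ P τ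
          · rw [hxin τ u huP, h1]; linarith
          · rw [hxout τ u huP, h1]; linarith
        · intro σ
          have hu' : ∀ σ', ∃ τ ≥ σ', u ∉ P τ := by
            by_contra hcon
            push_neg at hcon
            obtain ⟨σ', hσ'⟩ := hcon
            exact hu ⟨σ', hσ'⟩
          obtain ⟨τ, hτ, huP⟩ := hu' (max σ τ0)
          have hττ0 : τ0 ≤ τ := le_trans (le_max_right _ _) hτ
          refine ⟨τ, le_trans (le_max_left _ _) hτ, hττ0, ?_⟩
          show x τ u - x τ v + δ ≤ x (τ + 1) u - x (τ + 1) v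
          rw [hxout τ u huP, hxI τ hττ0 v hv]
          linarith
      have hpair2 : ∀ v u, v ∈ F → u ∉ F → ∀ᶠ τ in atTop, Δ ≤ x τ v - x τ u := by
        intro v u hv hu
        refine grow' (fun τ => x τ v - x τ u) δ hδpos τ0 ?_ ?_ Δ
        · intro τ hτ
          have h1 := hxF τ hτ v hv
          show x τ v - x τ u ≤ x (τ + 1) v - x (τ + 1) u
          by_cases huP : u ∈ P τ
          · rw [hxin τ u huP, h1]; linarith
          · rw [hxout τ u huP, h1]
        · intro σ
          have hu' : ∀ σ', ∃ τ ≥ σ', u ∈ P τ := by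
            by_contra hcon
            push_neg at hcon
            obtain ⟨σ', hσ'⟩ := hcon
            exact hu ⟨σ', hσ'⟩
          obtain ⟨τ, hτ, huP⟩ := hu' (max σ τ0)
          have hττ0 : τ0 ≤ τ := le_trans (le_max_right _ _) hτ
          refine ⟨τ, le_trans (le_max_left _ _) hτ, hττ0, ?_⟩
          show x τ v - x τ u + δ ≤ x (τ + 1) v - x (τ + 1) u
          rw [hxin τ u huP, hxF τ hττ0 v hv]
          linarith
      have h1 : ∀ᶠ τ in atTop, ∀ v ∈ I, ∀ u ∉ I, Δ ≤ x τ u - x τ v := by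
        rw [eventually_all]
        intro v
        by_cases hv : v ∈ I
        · have : ∀ᶠ τ in atTop, ∀ u, u ∉ I → Δ ≤ x τ u - x τ v := by
            rw [eventually_all]
            intro u
            by_cases hu : u ∈ I
            · exact Eventually.of_forall fun τ h => absurd hu h
            · exact (hpair1 v u hv hu).mono fun τ h _ => h
          exact this.mono fun τ h _ => h
        · exact Eventually.of_forall fun τ h => absurd h hv
      have h2 : ∀ᶠ τ in atTop, ∀ v ∈ F, ∀ u ∉ F, Δ ≤ x τ v - x τ u := by
        rw [eventually_all]
        intro v
        by_cases hv : v ∈ F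
        · have : ∀ᶠ τ in atTop, ∀ u, u ∉ F → Δ ≤ x τ v - x τ u := by
            rw [eventually_all]
            intro u
            by_cases hu : u ∈ F
            · exact Eventually.of_forall fun τ h => absurd hu h
            · exact (hpair2 v u hv hu).mono fun τ h _ => h
          exact this.mono fun τ h _ => h
        · exact Eventually.of_forall fun τ h => absurd h hv
      obtain ⟨b, hb⟩ := eventually_atTop.mp (h1.and h2)
      exact ⟨max b τ0, le_max_right _ _, fun τ hτ =>
        hb τ (le_trans (le_max_left _ _) hτ)⟩
  · -- δ ≤ 0 : B 0 = ∅
    left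
    refine ⟨0, Or.inr ?_⟩
    rw [hB, Set.eq_empty_iff_forall_notMem]
    intro v
    simp only [Set.mem_setOf_eq, not_lt]
    have h1 : mlo ≤ m v (x 0) := by
      rw [hmlo, hx0]
      exact Finset.inf'_le _ (Finset.mem_univ v)
    push_neg at hδpos
    linarith
end

section
/- Let t ≥ 1 be an integer and let R > 0 and c > 0 be reals with c·R ≥ 1. Suppose the nonnegative reals Δ_1, …, Δ_t satisfy Δ_i ≤ c·(R + ∑_{j=1}^{i−1} Δ_j)² for every i = 1, …, t (the empty sum being 0). Then ∑_{i=1}^{t} Δ_i ≤ (t·c·R)^{2^t − 1} · t² · R. -/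
/-- the recurrence bound for consecutive potential gaps in the
pumping algorithm. If `Δ_1, …, Δ_t ≥ 0` satisfy
`Δ_i ≤ c (R + ∑_{j<i} Δ_j)²` for all `i`, with `R, c > 0` and `cR ≥ 1`, then
`∑_{i=1}^t Δ_i ≤ (t c R)^{2^t − 1} · t² · R`. -/
theorem pumping_gap_recurrence_bound
    (t : ℕ) (ht : 1 ≤ t) (R c : ℝ) (hR : 0 < R) (hc : 0 < c) (hcR : 1 ≤ c * R)
    (Δ : ℕ → ℝ) (hΔ0 : ∀ i, 1 ≤ i → i ≤ t → 0 ≤ Δ i)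
    (hrec : ∀ i, 1 ≤ i → i ≤ t →
      Δ i ≤ c * (R + ∑ j ∈ Finset.Icc 1 (i - 1), Δ j) ^ 2) :
    ∑ i ∈ Finset.Icc 1 t, Δ i ≤ ((t : ℝ) * c * R) ^ (2 ^ t - 1) * (t : ℝ) ^ 2 * R := by
  rcases eq_or_lt_of_le ht with h1 | h2
  · -- t = 1
    subst h1
    have h := hrec 1 le_rfl le_rfl
    simp only [Nat.sub_self, Finset.Icc_self, Finset.sum_singleton] at *
    have : Finset.Icc 1 0 = (∅ : Finset ℕ) := by decide
    rw [this, Finset.sum_empty, add_zero] at h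
    norm_num
    nlinarith
  · -- 2 ≤ t
    have ht2 : (2:ℝ) ≤ (t:ℝ) := by exact_mod_cast h2
    set a : ℝ := (t : ℝ) * c * R with ha
    have ha1 : 1 ≤ a := by nlinarith
    have ha0 : 0 ≤ a := by linarith
    have key : ∀ i, i ≤ t → R + ∑ j ∈ Finset.Icc 1 i, Δ j ≤ a ^ (2 ^ i - 1) * R := by
      intro i
      induction i with
      | zero => intro _; simp
      | succ i ih =>
        intro hit
        have hi : i ≤ t := Nat.le_of_succ_le hit
        have hB := ih hi
        set B := R + ∑ j ∈ Finset.Icc 1 i, Δ j with hBdef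
        have hBR : R ≤ B := by
          have : 0 ≤ ∑ j ∈ Finset.Icc 1 i, Δ j :=
            Finset.sum_nonneg (fun j hj => hΔ0 j (Finset.mem_Icc.mp hj).1
              (le_trans (Finset.mem_Icc.mp hj).2 hi))
          simp [hBdef]; linarith
        have hΔ := hrec (i+1) (by omega) hit
        simp only [Nat.add_sub_cancel] at hΔ
        rw [← hBdef] at hΔ
        have hcB : 1 ≤ c * B := le_trans hcR (by nlinarith)
        have hstep : R + ∑ j ∈ Finset.Icc 1 (i+1), Δ j ≤ 2 * c * B ^ 2 := by
          rw [Finset.sum_Icc_succ_top (by omega : 1 ≤ i + 1), ← add_assoc, ← hBdef]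
          nlinarith
        have hpow0 : 0 ≤ a ^ (2 ^ i - 1) := pow_nonneg ha0 _
        have hexp : 2 ^ (i+1) - 1 = 2 * (2 ^ i - 1) + 1 := by
          have : 1 ≤ 2 ^ i := Nat.one_le_two_pow
          have : 2 ^ (i+1) = 2 * 2 ^ i := by ring
          omega
        have hsq : B ^ 2 ≤ (a ^ (2 ^ i - 1) * R) ^ 2 := by nlinarith
        have h2cR : 2 * c * R ≤ a := by nlinarith
        calc R + ∑ j ∈ Finset.Icc 1 (i+1), Δ j ≤ 2 * c * B ^ 2 := hstep
          _ ≤ 2 * c * (a ^ (2 ^ i - 1) * R) ^ 2 := by nlinarith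
          _ = (a ^ (2 ^ i - 1)) ^ 2 * (2 * c * R) * R := by ring
          _ ≤ (a ^ (2 ^ i - 1)) ^ 2 * a * R := by
              have := mul_le_mul_of_nonneg_right
                (mul_le_mul_of_nonneg_left h2cR (sq_nonneg (a ^ (2 ^ i - 1)))) hR.le
              linarith
          _ = a ^ (2 ^ (i+1) - 1) * R := by rw [hexp]; ring
    have hT := key t le_rfl
    have hpow0 : 0 ≤ a ^ (2 ^ t - 1) := pow_nonneg ha0 _
    have ht1 : (1:ℝ) ≤ (t:ℝ) := by linarith
    have hP : 0 ≤ a ^ (2 ^ t - 1) * R * ((t:ℝ) ^ 2 - 1) :=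
      mul_nonneg (mul_nonneg hpow0 hR.le) (by nlinarith)
    nlinarith [hT, hP]
end

section
/- Let K, L be finite nonempty sets, A ∈ ℝ^{K×L} a matrix all of whose entries are at most R, and let ε, b' be reals with 0 < ε < b'. Let K̄ ⊆ K be a subset such that for every k ∉ K̄ the uniform row average satisfies (1/|L|)·∑_{ℓ∈L} a_{kℓ} ≤ R − R²/ε. Suppose α ∈ Δ(K) satisfies min_{β∈Δ(L)} αᵀAβ ≥ b'. Then R > ε, K̄ is nonempty, and ∑_{k∉K̄} α_k < ε/R. -/
/-- the key truncation step. If all entries of `A` are at most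
`R`, every row `k ∉ K̄` has uniform average at most `R − R²/ε`, and
`α ∈ Δ(K)` guarantees `αᵀAβ ≥ b' > ε > 0` against every `β ∈ Δ(L)`, then
`R > ε`, `K̄` is nonempty, and `∑_{k ∉ K̄} α_k < ε/R`. -/
theorem truncation_bound
    {K L : Type*} [Fintype K] [Fintype L] [DecidableEq K]
    [Nonempty K] [Nonempty L]
    (A : Matrix K L ℝ) (R ε b' : ℝ)
    (hA : ∀ k l, A k l ≤ R) (hε : 0 < ε) (hεb : ε < b')
    (Kbar : Finset K)
    (hKbar : ∀ k ∉ Kbar, (1 / (Fintype.card L : ℝ)) * ∑ l, A k l ≤ R - R ^ 2 / ε)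
    (α : K → ℝ) (hα : α ∈ stdSimplex ℝ K)
    (hguar : ∀ β ∈ stdSimplex ℝ L, b' ≤ ∑ k, ∑ l, α k * A k l * β l) :
    ε < R ∧ Kbar.Nonempty ∧ ∑ k ∈ Kbarᶜ, α k < ε / R := by
  classical
  set n : ℝ := (Fintype.card L : ℝ) with hn
  have hnpos : (0:ℝ) < n := by
    rw [hn]; exact_mod_cast Fintype.card_pos (α := L)
  set β : L → ℝ := fun _ => 1 / n with hβ
  have hβmem : β ∈ stdSimplex ℝ L := by
    constructor
    · intro l; positivity
    · simp only [β, Finset.sum_const, Finset.card_univ, nsmul_eq_mul]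
      field_simp
      exact hn.symm
  have hmain := hguar β hβmem
  have hrow : ∀ k, ∑ l, α k * A k l * β l = α k * ((1/n) * ∑ l, A k l) := by
    intro k
    rw [Finset.mul_sum, Finset.mul_sum]
    exact Finset.sum_congr rfl fun l _ => by simp only [β]; ring
  rw [Finset.sum_congr rfl (fun k _ => hrow k)] at hmain
  have hα0 : ∀ k, 0 ≤ α k := hα.1
  have hα1 : ∑ k, α k = 1 := hα.2
  have havgR : ∀ k, (1/n) * ∑ l, A k l ≤ R := by
    intro k
    have h1 : ∑ l, A k l ≤ ∑ _l : L, R := Finset.sum_le_sum fun l _ => hA k l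
    have h2 : ∑ _l : L, R = n * R := by
      simp [Finset.sum_const, Finset.card_univ, hn, nsmul_eq_mul]
    have h3 : (1/n) * ∑ l, A k l ≤ (1/n) * (n * R) := by
      rw [h2] at h1
      exact mul_le_mul_of_nonneg_left h1 (by positivity)
    calc (1/n) * ∑ l, A k l ≤ (1/n) * (n * R) := h3
      _ = R := by field_simp
  set s : ℝ := ∑ k ∈ Kbarᶜ, α k with hs
  set t : ℝ := ∑ k ∈ Kbar, α k with ht
  have hts : t + s = 1 := by
    rw [ht, hs, Finset.sum_add_sum_compl]
    exact hα1
  have hs0 : 0 ≤ s := Finset.sum_nonneg fun k _ => hα0 k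
  have ht0 : 0 ≤ t := Finset.sum_nonneg fun k _ => hα0 k
  have hsplit : ∑ k, α k * ((1/n) * ∑ l, A k l)
      = ∑ k ∈ Kbar, α k * ((1/n) * ∑ l, A k l)
        + ∑ k ∈ Kbarᶜ, α k * ((1/n) * ∑ l, A k l) :=
    (Finset.sum_add_sum_compl Kbar _).symm
  have h1 : ∑ k ∈ Kbar, α k * ((1/n) * ∑ l, A k l) ≤ t * R := by
    rw [ht, Finset.sum_mul]
    exact Finset.sum_le_sum fun k _ =>
      mul_le_mul_of_nonneg_left (havgR k) (hα0 k)
  have h2 : ∑ k ∈ Kbarᶜ, α k * ((1/n) * ∑ l, A k l) ≤ s * (R - R^2/ε) := by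
    rw [hs, Finset.sum_mul]
    refine Finset.sum_le_sum fun k hk => ?_
    have hk' : k ∉ Kbar := Finset.mem_compl.mp hk
    exact mul_le_mul_of_nonneg_left (hKbar k hk') (hα0 k)
  have hkey : b' ≤ t * R + s * (R - R^2/ε) := by
    calc b' ≤ _ := hmain
      _ = _ := hsplit
      _ ≤ t * R + s * (R - R^2/ε) := add_le_add h1 h2
  have hbR : b' ≤ R := by
    have hR2 : 0 ≤ R^2/ε * s := by positivity
    nlinarith [hkey, hts]
  have hεR : ε < R := lt_of_lt_of_le hεb hbR
  have hRpos : 0 < R := lt_trans hε hεR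
  -- from hkey: s * R^2/ε ≤ R - b' < R - ε
  have hsbound : s * (R^2/ε) ≤ R - b' := by nlinarith [hkey, hts]
  have hsfin : s < ε / R := by
    have h4 : s * (R^2/ε) < R - ε := lt_of_le_of_lt hsbound (by linarith)
    have heq : s * (R^2/ε) * ε = s * R^2 := by field_simp
    have h5 : s * R ^ 2 < ε * (R - ε) := by
      have h := mul_lt_mul_of_pos_right h4 hε
      rw [heq] at h
      nlinarith [h]
    rw [lt_div_iff₀ hRpos]
    nlinarith [h5, mul_pos hε hε, hRpos]
  refine ⟨hεR, ?_, hsfin⟩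
  by_contra hne
  rw [Finset.not_nonempty_iff_eq_empty] at hne
  have : s = 1 := by
    rw [hs, hne, Finset.compl_empty]
    exact hα1
  have hεR1 : ε / R < 1 := (div_lt_one hRpos).mpr hεR
  linarith [hsfin, this ▸ hsfin]
end

section
/- Let V be a finite nonempty set, Q ∈ ℝ^{V×V} a row-stochastic matrix (all entries nonnegative, every row summing to 1), and I ⊆ V a set closed under Q, i.e., Q_{vu} = 0 whenever v ∈ I and u ∉ I. Let c, x ∈ ℝ^V and b ∈ ℝ satisfy c_v + x_v − (Qx)_v ≥ b for every v ∈ I. Then for every v ∈ I: liminf_{N→∞} (1/(N+1)) ∑_{j=0}^{N} (Q^j c)_v ≥ b. -/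
open Filter

set_option maxHeartbeats 1000000 in
/-- if `I` is closed under the row-stochastic matrix `Q` and the
potential-transformed one-step reward `c + x − Qx` is at least `b` on `I`, then
the limiting average payoff from every state of `I` is at least `b`. -/
theorem closed_set_lower_bound
    {V : Type*} [Fintype V] [DecidableEq V] [Nonempty V]
    (Q : Matrix V V ℝ)
    (hQ0 : ∀ v u, 0 ≤ Q v u) (hQ1 : ∀ v, ∑ u, Q v u = 1)
    (I : Set V) (hI : ∀ v ∈ I, ∀ u ∉ I, Q v u = 0)
    (c x : V → ℝ) (b : ℝ)
    (hb : ∀ v ∈ I, b ≤ c v + x v - Q.mulVec x v) :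
    ∀ v ∈ I, b ≤ liminf (fun N : ℕ =>
      (1 / (N + 1 : ℝ)) * ∑ j ∈ Finset.range (N + 1), ((Q ^ j).mulVec c) v) atTop := by
  -- powers are entrywise nonnegative
  have pow0 : ∀ j (v u : V), 0 ≤ (Q ^ j) v u := by
    intro j
    induction j with
    | zero =>
        intro v u
        simp only [pow_zero, Matrix.one_apply]
        split <;> norm_num
    | succ n ih =>
        intro v u
        rw [pow_succ, Matrix.mul_apply]
        exact Finset.sum_nonneg fun w _ => mul_nonneg (ih v w) (hQ0 w u)
  -- rows of powers sum to 1
  have pow1 : ∀ j (v : V), ∑ u, (Q ^ j) v u = 1 := by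
    intro j
    induction j with
    | zero =>
        intro v
        simp [Matrix.one_apply]
    | succ n ih =>
        intro v
        simp only [pow_succ, Matrix.mul_apply]
        rw [Finset.sum_comm]
        calc ∑ w, ∑ u, (Q ^ n) v w * Q w u
            = ∑ w, (Q ^ n) v w * ∑ u, Q w u := by
              simp [Finset.mul_sum]
          _ = 1 := by simp [hQ1, ih]
  -- closure under powers
  have powI : ∀ j, ∀ v ∈ I, ∀ u ∉ I, (Q ^ j) v u = 0 := by
    intro j
    induction j with
    | zero =>
        intro v hv u hu
        have : v ≠ u := fun h => hu (h ▸ hv)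
        simp [Matrix.one_apply, this]
    | succ n ih =>
        intro v hv u hu
        rw [pow_succ, Matrix.mul_apply]
        apply Finset.sum_eq_zero
        intro w _
        by_cases hw : w ∈ I
        · rw [hI w hw u hu, mul_zero]
        · rw [ih v hv w hw, zero_mul]
  intro v hv
  -- per-step inequality
  have key : ∀ j : ℕ, b ≤ ((Q ^ j).mulVec c) v
      + (((Q ^ j).mulVec x) v - ((Q ^ (j + 1)).mulVec x) v) := by
    intro j
    have hstep : ((Q ^ (j + 1)).mulVec x) v = ((Q ^ j).mulVec (Q.mulVec x)) v := by
      rw [Matrix.mulVec_mulVec, ← pow_succ]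
    rw [hstep]
    have : ∑ u, (Q ^ j) v u * b
        ≤ ∑ u, (Q ^ j) v u * (c u + x u - Q.mulVec x u) := by
      apply Finset.sum_le_sum
      intro u _
      by_cases hu : u ∈ I
      · exact mul_le_mul_of_nonneg_left (hb u hu) (pow0 j v u)
      · rw [powI j v hv u hu]; simp
    calc b = ∑ u, (Q ^ j) v u * b := by
            rw [← Finset.sum_mul, pow1 j v, one_mul]
      _ ≤ ∑ u, (Q ^ j) v u * (c u + x u - Q.mulVec x u) := this
      _ = ((Q ^ j).mulVec c) v + (((Q ^ j).mulVec x) v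
            - ((Q ^ j).mulVec (Q.mulVec x)) v) := by
          simp only [Matrix.mulVec, dotProduct, mul_add, mul_sub]
          rw [Finset.sum_sub_distrib, Finset.sum_add_distrib]
          ring
  -- bound on (Q^j x) v
  have hxb : ∀ j : ℕ, -‖x‖ ≤ ((Q ^ j).mulVec x) v := by
    intro j
    calc -‖x‖ = ∑ u, (Q ^ j) v u * (-‖x‖) := by
          rw [← Finset.sum_mul, pow1 j v, one_mul]
      _ ≤ ∑ u, (Q ^ j) v u * x u := by
          apply Finset.sum_le_sum
          intro u _
          apply mul_le_mul_of_nonneg_left _ (pow0 j v u)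
          have := norm_le_pi_norm x u
          have h2 : |x u| ≤ ‖x‖ := by simpa [Real.norm_eq_abs] using this
          linarith [neg_abs_le (x u)]
      _ = ((Q ^ j).mulVec x) v := by simp [Matrix.mulVec, dotProduct]
  have hxv : x v ≤ ‖x‖ := by
    have := norm_le_pi_norm x v
    have h2 : |x v| ≤ ‖x‖ := by simpa [Real.norm_eq_abs] using this
    linarith [le_abs_self (x v)]
  -- lower bound for the averages
  set f : ℕ → ℝ := fun N =>
    (1 / (N + 1 : ℝ)) * ∑ j ∈ Finset.range (N + 1), ((Q ^ j).mulVec c) v with hf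
  have hlow : ∀ N : ℕ, b - 2 * ‖x‖ / (N + 1 : ℝ) ≤ f N := by
    intro N
    have hpos : (0 : ℝ) < (N : ℝ) + 1 := by positivity
    have hsum : (N + 1 : ℝ) * b
        ≤ (∑ j ∈ Finset.range (N + 1), ((Q ^ j).mulVec c) v) + 2 * ‖x‖ := by
      have h1 : ∑ j ∈ Finset.range (N + 1), b
          ≤ ∑ j ∈ Finset.range (N + 1), (((Q ^ j).mulVec c) v
            + (((Q ^ j).mulVec x) v - ((Q ^ (j + 1)).mulVec x) v)) :=
        Finset.sum_le_sum fun j _ => key j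
      have h2 : ∑ j ∈ Finset.range (N + 1),
          (((Q ^ j).mulVec x) v - ((Q ^ (j + 1)).mulVec x) v)
          = ((Q ^ 0).mulVec x) v - ((Q ^ (N + 1)).mulVec x) v :=
        Finset.sum_range_sub' (fun j => ((Q ^ j).mulVec x) v) (N + 1)
      rw [Finset.sum_add_distrib, h2] at h1
      have h3 : ((Q ^ 0).mulVec x) v = x v := by
        simp [Matrix.mulVec, dotProduct, Matrix.one_apply]
      rw [h3] at h1
      have h4 := hxb (N + 1)
      have h5 : ∑ j ∈ Finset.range (N + 1), b = ((N : ℝ) + 1) * b := by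
        simp [Finset.sum_const, nsmul_eq_mul]
      rw [h5] at h1
      linarith
    simp only [hf]
    have hS : (1 / ((N : ℝ) + 1)) * (∑ j ∈ Finset.range (N + 1), ((Q ^ j).mulVec c) v)
        = (∑ j ∈ Finset.range (N + 1), ((Q ^ j).mulVec c) v) / ((N : ℝ) + 1) := by
      ring
    rw [hS, le_div_iff₀ hpos]
    have heq : (b - 2 * ‖x‖ / ((N : ℝ) + 1)) * ((N : ℝ) + 1)
        = ((N : ℝ) + 1) * b - 2 * ‖x‖ := by
      field_simp
    rw [heq]
    linarith
  -- pass to the liminf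
  have hg : Tendsto (fun N : ℕ => b - 2 * ‖x‖ / ((N : ℝ) + 1)) atTop (nhds b) := by
    have h1 : Tendsto (fun N : ℕ => ((N : ℝ) + 1)) atTop atTop :=
      tendsto_natCast_atTop_atTop.atTop_add tendsto_const_nhds
    have h2 : Tendsto (fun N : ℕ => 2 * ‖x‖ / ((N : ℝ) + 1)) atTop (nhds 0) :=
      Tendsto.div_atTop tendsto_const_nhds h1
    have h3 : Tendsto (fun N : ℕ => b - 2 * ‖x‖ / ((N : ℝ) + 1)) atTop (nhds (b - 0)) :=
      Tendsto.sub (tendsto_const_nhds : Tendsto (fun _ : ℕ => b) atTop (nhds b)) h2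
    rw [sub_zero] at h3
    exact h3
  have hgf : ∀ᶠ N in atTop, (fun N : ℕ => b - 2 * ‖x‖ / ((N : ℝ) + 1)) N ≤ f N :=
    Eventually.of_forall hlow
  have hup : ∀ j : ℕ, ((Q ^ j).mulVec c) v ≤ ‖c‖ := by
    intro j
    calc ((Q ^ j).mulVec c) v = ∑ u, (Q ^ j) v u * c u := by
          simp [Matrix.mulVec, dotProduct]
      _ ≤ ∑ u, (Q ^ j) v u * ‖c‖ := by
          apply Finset.sum_le_sum
          intro u _
          apply mul_le_mul_of_nonneg_left _ (pow0 j v u)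
          have h2 : |c u| ≤ ‖c‖ := by
            simpa [Real.norm_eq_abs] using norm_le_pi_norm c u
          linarith [le_abs_self (c u)]
      _ = ‖c‖ := by rw [← Finset.sum_mul, pow1 j v, one_mul]
  have hfup : ∀ N : ℕ, f N ≤ ‖c‖ := by
    intro N
    have hpos : (0 : ℝ) < (N : ℝ) + 1 := by positivity
    have hsum : ∑ j ∈ Finset.range (N + 1), ((Q ^ j).mulVec c) v
        ≤ ((N : ℝ) + 1) * ‖c‖ := by
      calc ∑ j ∈ Finset.range (N + 1), ((Q ^ j).mulVec c) v
          ≤ ∑ j ∈ Finset.range (N + 1), ‖c‖ :=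
            Finset.sum_le_sum fun j _ => hup j
        _ = ((N : ℝ) + 1) * ‖c‖ := by simp [Finset.sum_const, nsmul_eq_mul]
    simp only [hf]
    rw [one_div, inv_mul_le_iff₀ hpos]
    linarith
  have hcob : IsCoboundedUnder (· ≥ ·) atTop f := by
    apply IsBoundedUnder.isCoboundedUnder_ge
    exact isBoundedUnder_of ⟨‖c‖, hfup⟩
  have hbdd : IsBoundedUnder (· ≥ ·) atTop f := by
    apply isBoundedUnder_of
    refine ⟨b - 2 * ‖x‖, fun N => ?_⟩
    have hcast : (0 : ℝ) ≤ (N : ℝ) := Nat.cast_nonneg N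
    have hpos : (0 : ℝ) < (N : ℝ) + 1 := by positivity
    have h1 : 2 * ‖x‖ / ((N : ℝ) + 1) ≤ 2 * ‖x‖ :=
      div_le_self (by positivity) (by linarith)
    have := hlow N
    linarith
  calc b = liminf (fun N : ℕ => b - 2 * ‖x‖ / ((N : ℝ) + 1)) atTop := (hg.liminf_eq).symm
    _ ≤ liminf f atTop := liminf_le_liminf hgf hg.isBoundedUnder_ge hcob
end

section
/- Let V be a finite nonempty set, Q ∈ ℝ^{V×V} a row-stochastic matrix (all entries nonnegative, every row summing to 1), and F ⊆ V a set closed under Q, i.e., Q_{uw} = 0 whenever u ∈ F and w ∉ F. Let c, x ∈ ℝ^V and a ∈ ℝ satisfy c_u + x_u − (Qx)_u ≤ a for every u ∈ F. Then for every u ∈ F: limsup_{N→∞} (1/(N+1)) ∑_{j=0}^{N} (Q^j c)_u ≤ a. -/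
open Filter

/-- if `F` is closed under the row-stochastic matrix `Q` and the
potential-transformed one-step reward `c + x − Qx` is at most `a` on `F`, then
the limsup of the Cesàro averages from every state of `F` is at most `a`. -/
theorem closed_set_upper_bound
    {V : Type*} [Fintype V] [DecidableEq V] [Nonempty V]
    (Q : Matrix V V ℝ)
    (hQ0 : ∀ v u, 0 ≤ Q v u) (hQ1 : ∀ v, ∑ u, Q v u = 1)
    (F : Set V) (hF : ∀ u ∈ F, ∀ w ∉ F, Q u w = 0)
    (c x : V → ℝ) (a : ℝ)
    (ha : ∀ u ∈ F, c u + x u - Q.mulVec x u ≤ a) :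
    ∀ u ∈ F, limsup (fun N : ℕ =>
      (1 / (N + 1 : ℝ)) * ∑ j ∈ Finset.range (N + 1), ((Q ^ j).mulVec c) u) atTop ≤ a := by
  classical
  -- powers are nonnegative
  have hp0 : ∀ m, ∀ v u, 0 ≤ (Q ^ m) v u := by
    intro m
    induction m with
    | zero => intro v u; by_cases h : v = u <;> simp [Matrix.one_apply, h]
    | succ n ih =>
      intro v u
      rw [pow_succ, Matrix.mul_apply]
      exact Finset.sum_nonneg fun w _ => mul_nonneg (ih v w) (hQ0 w u)
  -- powers are row-stochastic
  have hp1 : ∀ m, ∀ v, ∑ u, (Q ^ m) v u = 1 := by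
    intro m
    induction m with
    | zero => intro v; simp [Matrix.one_apply]
    | succ n ih =>
      intro v
      simp only [pow_succ, Matrix.mul_apply]
      rw [Finset.sum_comm]
      simp only [← Finset.mul_sum, hQ1]
      simpa using ih v
  -- powers keep F closed
  have hpF : ∀ m, ∀ u ∈ F, ∀ w ∉ F, (Q ^ m) u w = 0 := by
    intro m
    induction m with
    | zero =>
      intro u hu w hw
      have : u ≠ w := fun h => hw (h ▸ hu)
      simp [Matrix.one_apply, this]
    | succ n ih =>
      intro u hu w hw
      rw [pow_succ, Matrix.mul_apply]
      refine Finset.sum_eq_zero fun z _ => ?_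
      by_cases hz : z ∈ F
      · rw [hF z hz w hw, mul_zero]
      · rw [ih u hu z hz, zero_mul]
  -- entries of powers are ≤ 1
  have hple : ∀ m v u, (Q ^ m) v u ≤ 1 := by
    intro m v u
    calc (Q ^ m) v u ≤ ∑ w, (Q ^ m) v w :=
          Finset.single_le_sum (fun w _ => hp0 m v w) (Finset.mem_univ u)
      _ = 1 := hp1 m v
  intro u hu
  set B : ℝ := ∑ w, |x w| with hB
  set C : ℝ := ∑ w, |c w| with hC
  -- uniform bounds on (Q^m).mulVec x and mulVec c
  have hbound : ∀ (y : V → ℝ) m, |((Q ^ m).mulVec y) u| ≤ ∑ w, |y w| := by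
    intro y m
    rw [Matrix.mulVec, dotProduct]
    calc |∑ w, (Q ^ m) u w * y w| ≤ ∑ w, |(Q ^ m) u w * y w| := Finset.abs_sum_le_sum_abs _ _
      _ ≤ ∑ w, |y w| := by
          refine Finset.sum_le_sum fun w _ => ?_
          rw [abs_mul, abs_of_nonneg (hp0 m u w)]
          calc (Q ^ m) u w * |y w| ≤ 1 * |y w| :=
                mul_le_mul_of_nonneg_right (hple m u w) (abs_nonneg _)
            _ = |y w| := one_mul _
  -- key step inequality
  have key : ∀ j : ℕ, ((Q ^ j).mulVec c) u ≤
      a + ((Q ^ (j + 1)).mulVec x) u - ((Q ^ j).mulVec x) u := by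
    intro j
    have step : ((Q ^ j).mulVec c) u ≤ ∑ w, (Q ^ j) u w * (a + Q.mulVec x w - x w) := by
      rw [Matrix.mulVec, dotProduct]
      refine Finset.sum_le_sum fun w _ => ?_
      by_cases hw : w ∈ F
      · exact mul_le_mul_of_nonneg_left (by linarith [ha w hw]) (hp0 j u w)
      · rw [hpF j u hu w hw, zero_mul, zero_mul]
    have expand : ∑ w, (Q ^ j) u w * (a + Q.mulVec x w - x w) =
        a + ((Q ^ (j + 1)).mulVec x) u - ((Q ^ j).mulVec x) u := by
      have h1 : ∑ w, (Q ^ j) u w * Q.mulVec x w = ((Q ^ (j + 1)).mulVec x) u := by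
        rw [pow_succ, ← Matrix.mulVec_mulVec]
        rfl
      have h2 : ∑ w, (Q ^ j) u w * x w = ((Q ^ j).mulVec x) u := rfl
      have h3 : ∑ w, (Q ^ j) u w * a = a := by
        rw [← Finset.sum_mul, hp1 j u, one_mul]
      calc ∑ w, (Q ^ j) u w * (a + Q.mulVec x w - x w)
          = ∑ w, ((Q ^ j) u w * a + (Q ^ j) u w * Q.mulVec x w - (Q ^ j) u w * x w) := by
            refine Finset.sum_congr rfl fun w _ => ?_; ring
        _ = a + ((Q ^ (j + 1)).mulVec x) u - ((Q ^ j).mulVec x) u := by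
            rw [Finset.sum_sub_distrib, Finset.sum_add_distrib, h1, h2, h3]
    linarith [step, expand.le, expand.ge]
  set f : ℕ → ℝ := fun N =>
    (1 / (N + 1 : ℝ)) * ∑ j ∈ Finset.range (N + 1), ((Q ^ j).mulVec c) u with hf
  set g : ℕ → ℝ := fun N => a + 2 * B / (N + 1 : ℝ) with hg
  have hpos : ∀ N : ℕ, (0 : ℝ) < (N : ℝ) + 1 := fun N => by positivity
  have hfg : ∀ N, f N ≤ g N := by
    intro N
    have hsum : ∑ j ∈ Finset.range (N + 1), ((Q ^ j).mulVec c) u ≤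
        (N + 1 : ℝ) * a + 2 * B := by
      calc ∑ j ∈ Finset.range (N + 1), ((Q ^ j).mulVec c) u
          ≤ ∑ j ∈ Finset.range (N + 1),
              (a + (((Q ^ (j + 1)).mulVec x) u - ((Q ^ j).mulVec x) u)) := by
            refine Finset.sum_le_sum fun j _ => ?_
            linarith [key j]
        _ = (N + 1 : ℝ) * a +
              (((Q ^ (N + 1)).mulVec x) u - ((Q ^ 0).mulVec x) u) := by
            rw [Finset.sum_add_distrib, Finset.sum_range_sub (fun m => ((Q ^ m).mulVec x) u)]
            simp [mul_comm]
        _ ≤ (N + 1 : ℝ) * a + 2 * B := by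
            have h1 := hbound x (N + 1)
            have h2 := hbound x 0
            have := abs_le.mp h1
            have := abs_le.mp h2
            simp only [← hB] at *
            linarith [(abs_le.mp h1).2, (abs_le.mp h2).2, (abs_le.mp h2).1]
    have hN := hpos N
    have : f N ≤ (1 / ((N : ℝ) + 1)) * ((N + 1 : ℝ) * a + 2 * B) := by
      rw [hf]
      exact mul_le_mul_of_nonneg_left hsum (by positivity)
    calc f N ≤ (1 / ((N : ℝ) + 1)) * ((N + 1 : ℝ) * a + 2 * B) := this
      _ = a + 2 * B / (N + 1 : ℝ) := by field_simp
  have hlow : ∀ N, -C ≤ f N := by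
    intro N
    have hsum : -((N : ℝ) + 1) * C ≤ ∑ j ∈ Finset.range (N + 1), ((Q ^ j).mulVec c) u := by
      calc -((N : ℝ) + 1) * C = ∑ _j ∈ Finset.range (N + 1), (-C) := by
            simp [Finset.card_range]; ring
        _ ≤ ∑ j ∈ Finset.range (N + 1), ((Q ^ j).mulVec c) u := by
            refine Finset.sum_le_sum fun j _ => ?_
            have := (abs_le.mp (hbound c j)).1
            simpa [← hC] using this
    have hN := hpos N
    have h2 : (1 / ((N : ℝ) + 1)) * (-((N : ℝ) + 1) * C) ≤ f N := by
      rw [hf]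
      exact mul_le_mul_of_nonneg_left hsum (by positivity)
    calc -C = (1 / ((N : ℝ) + 1)) * (-((N : ℝ) + 1) * C) := by field_simp
      _ ≤ f N := h2
  have hgtend : Tendsto g atTop (nhds a) := by
    have h1 : Tendsto (fun N : ℕ => 2 * B / (N + 1 : ℝ)) atTop (nhds 0) := by
      have := tendsto_natCast_atTop_atTop (R := ℝ)
      have h2 : Tendsto (fun N : ℕ => (N : ℝ) + 1) atTop atTop :=
        this.atTop_add tendsto_const_nhds
      simpa using Tendsto.div_atTop (tendsto_const_nhds (x := 2 * B)) h2
    have := Tendsto.const_add a h1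
    simpa using this
  calc limsup f atTop ≤ limsup g atTop := by
        refine limsup_le_limsup (Eventually.of_forall hfg) ?_ ?_
        · exact isCoboundedUnder_le_of_le atTop hlow
        · exact hgtend.isBoundedUnder_le
    _ = a := hgtend.limsup_eq
end

section
/- Let Γ be a stochastic game with nonnegative rewards (0 ≤ r^{vu}_{kℓ} for all v,u,k,ℓ), and let W > 0 be such that every nonzero transition probability satisfies p^{vu}_{kℓ} ≥ 1/W. Let ε > 0, let x ∈ ℝ^V be a potential vector, and suppose there exist disjoint nonempty subsets I, F ⊆ V and reals a', b' ∈ [0, m⁺(x)] with b' − a' ≥ 3ε, a' < (m⁺(x)+m⁻(x))/2, and b' ≥ (m⁺(x)+m⁻(x))/2, such that: (N4) m^v(x) ≥ b' for all v ∈ I, and m^u(x) < a' for all u ∈ F; (N5) x^u − x^v ≥ |L^v|·W·R^v(x)²/ε for all u ∉ I and v ∈ I; (N6) x^u − x^v ≥ |K^u|·W·R^u(x)²/ε for all u ∈ F and v ∉ F. Then there exist strategies α^v ∈ Δ(K^v) for v ∈ I and β^u ∈ Δ(L^u) for u ∈ F such that: (N1) α^v_k · p^{vu}_{kℓ} = 0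 for all v ∈ I, u ∉ I, k ∈ K^v, ℓ ∈ L^v; (N2) β^u_ℓ · p^{uw}_{kℓ} = 0 for all u ∈ F, w ∉ F, ℓ ∈ L^u, k ∈ K^u; and (N3) min_{β̃∈Δ(L^v)} (α^v)ᵀ A^v(x) β̃ ≥ b' − ε for all v ∈ I, and max_{α̃∈Δ(K^u)} α̃ᵀ A^u(x) β^u < a' + ε for all u ∈ F. (Since (b'−ε) − (a'+ε) ≥ ε, the game is ε-non-ergodic.) -/
open Filter Matrix

variable {V : Type*} [Fintype V] [DecidableEq V] [Nonempty V]
  {K L : V → Type*} [∀ v, Fintype (K v)] [∀ v, Nonempty (K v)]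
  [∀ v, Fintype (L v)] [∀ v, Nonempty (L v)]

/-- The transition matrix `Q(α,β)` induced by a pair of stationary strategies. -/
noncomputable def Qmat (p : ∀ v : V, K v → L v → V → ℝ)
    (α : ∀ v, K v → ℝ) (β : ∀ v, L v → ℝ) : Matrix V V ℝ :=
  Matrix.of fun v u => ∑ k, ∑ l, α v k * β v l * p v k l u

/-- The expected one-step reward vector `c(α,β)` induced by stationary
strategies. -/
noncomputable def cvec (p r : ∀ v : V, K v → L v → V → ℝ)
    (α : ∀ v, K v → ℝ) (β : ∀ v, L v → ℝ) : V → ℝ :=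
  fun v => ∑ k, ∑ l, α v k * β v l * ∑ u, p v k l u * r v k l u

/-- The limiting average payoff `g^v(α,β)` from initial position `v`. -/
noncomputable def gval (p r : ∀ v : V, K v → L v → V → ℝ)
    (α : ∀ v, K v → ℝ) (β : ∀ v, L v → ℝ) (v : V) : ℝ :=
  liminf (fun N : ℕ => (1 / (N + 1 : ℝ)) * ∑ j ∈ Finset.range (N + 1),
    ((Qmat p α β ^ j).mulVec (cvec p r α β)) v) atTop

/-- `m⁺(x) = max_v m^v(x)`. -/
noncomputable def mplus (p r : ∀ v : V, K v → L v → V → ℝ) (x : V → ℝ) : ℝ :=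
  Finset.univ.sup' Finset.univ_nonempty (locVal p r x)

/-- `m⁻(x) = min_v m^v(x)`. -/
noncomputable def mminus (p r : ∀ v : V, K v → L v → V → ℝ) (x : V → ℝ) : ℝ :=
  Finset.univ.inf' Finset.univ_nonempty (locVal p r x)

/-- `ã^v_{kℓ}(x) = ∑_u p^{vu}_{kℓ} r^{vu}_{kℓ} + ∑_{u : x^u ≤ x^v} p^{vu}_{kℓ}(x^v − x^u)`. -/
noncomputable def atil (p r : ∀ v : V, K v → L v → V → ℝ) (x : V → ℝ)
    (v : V) (k : K v) (l : L v) : ℝ :=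
  (∑ u, p v k l u * r v k l u) + ∑ u, if x u ≤ x v then p v k l u * (x v - x u) else 0

/-- `b̃^v_{kℓ}(x) = m⁺(x) − ∑_u p^{vu}_{kℓ} r^{vu}_{kℓ} − ∑_{u : x^u ≥ x^v} p^{vu}_{kℓ}(x^v − x^u)`. -/
noncomputable def btil (p r : ∀ v : V, K v → L v → V → ℝ) (x : V → ℝ)
    (v : V) (k : K v) (l : L v) : ℝ :=
  mplus p r x - (∑ u, p v k l u * r v k l u) -
    ∑ u, if x v ≤ x u then p v k l u * (x v - x u) else 0

/-- `R^v(x)`: the maximum of `ã^v_{kℓ}(x)` if `m^v(x) ≥ (m⁺(x)+m⁻(x))/2`, and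
the maximum of `b̃^v_{kℓ}(x)` otherwise. -/
noncomputable def Rval (p r : ∀ v : V, K v → L v → V → ℝ) (x : V → ℝ) (v : V) : ℝ :=
  if (mplus p r x + mminus p r x) / 2 ≤ locVal p r x v then
    (Finset.univ : Finset (K v × L v)).sup' Finset.univ_nonempty
      (fun kl => atil p r x v kl.1 kl.2)
  else
    (Finset.univ : Finset (K v × L v)).sup' Finset.univ_nonempty
      (fun kl => btil p r x v kl.1 kl.2)

section Aux

variable {ι : Type*} [Fintype ι]

lemma simplex_combo_le {w f : ι → ℝ} {M : ℝ} (hw : w ∈ stdSimplex ℝ ι)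
    (hf : ∀ i, f i ≤ M) : ∑ i, w i * f i ≤ M := by
  calc ∑ i, w i * f i ≤ ∑ i, w i * M :=
        Finset.sum_le_sum fun i _ => mul_le_mul_of_nonneg_left (hf i) (hw.1 i)
    _ = M := by rw [← Finset.sum_mul, hw.2, one_mul]

lemma le_simplex_combo {w f : ι → ℝ} {M : ℝ} (hw : w ∈ stdSimplex ℝ ι)
    (hf : ∀ i, M ≤ f i) : M ≤ ∑ i, w i * f i := by
  calc M = ∑ i, w i * M := by rw [← Finset.sum_mul, hw.2, one_mul]
    _ ≤ ∑ i, w i * f i :=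
        Finset.sum_le_sum fun i _ => mul_le_mul_of_nonneg_left (hf i) (hw.1 i)

noncomputable def purePt [DecidableEq ι] (i₀ : ι) : ι → ℝ := fun i => if i = i₀ then 1 else 0

lemma purePt_mem [DecidableEq ι] [Nonempty ι] (i₀ : ι) : purePt i₀ ∈ stdSimplex ℝ ι := by
  constructor
  · intro i; unfold purePt; split <;> norm_num
  · unfold purePt
    rw [Finset.sum_ite_eq' Finset.univ i₀ (fun _ => (1:ℝ))]
    simp

lemma sum_mul_purePt [DecidableEq ι] (i₀ : ι) (f : ι → ℝ) : ∑ i, f i * purePt i₀ i = f i₀ := by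
  unfold purePt
  have : ∀ i, f i * (if i = i₀ then (1:ℝ) else 0) = if i = i₀ then f i else 0 := by
    intro i; split <;> ring
  simp_rw [this]
  rw [Finset.sum_ite_eq' Finset.univ i₀ f]
  simp

instance stdSimplex_nonempty' [Nonempty ι] : Nonempty (stdSimplex ℝ ι) := by
  classical
  exact ⟨⟨_, purePt_mem (Classical.arbitrary ι)⟩⟩

end Aux

section Game

variable {K L : Type*} [Fintype K] [Fintype L] [Nonempty K] [Nonempty L]

lemma payoff_eq_cols (A : Matrix K L ℝ) (α : K → ℝ) (β : L → ℝ) :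
    ∑ k, ∑ l, α k * A k l * β l = ∑ l, β l * ∑ k, α k * A k l := by
  rw [Finset.sum_comm]
  refine Finset.sum_congr rfl fun l _ => ?_
  rw [Finset.mul_sum]
  exact Finset.sum_congr rfl fun k _ => by ring

lemma payoff_eq_rows (A : Matrix K L ℝ) (α : K → ℝ) (β : L → ℝ) :
    ∑ k, ∑ l, α k * A k l * β l = ∑ k, α k * ∑ l, A k l * β l := by
  refine Finset.sum_congr rfl fun k _ => ?_
  rw [Finset.mul_sum]
  exact Finset.sum_congr rfl fun l _ => by ring

noncomputable def colMin (A : Matrix K L ℝ) (α : K → ℝ) : ℝ :=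
  Finset.univ.inf' Finset.univ_nonempty (fun l => ∑ k, α k * A k l)

noncomputable def rowMax (A : Matrix K L ℝ) (β : L → ℝ) : ℝ :=
  Finset.univ.sup' Finset.univ_nonempty (fun k => ∑ l, A k l * β l)

lemma colMin_le_payoff (A : Matrix K L ℝ) (α : K → ℝ) {β : L → ℝ}
    (hβ : β ∈ stdSimplex ℝ L) :
    colMin A α ≤ ∑ k, ∑ l, α k * A k l * β l := by
  rw [payoff_eq_cols]
  exact le_simplex_combo hβ fun l => Finset.inf'_le _ (Finset.mem_univ l)

lemma iInf_payoff_eq (A : Matrix K L ℝ) (α : K → ℝ) :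
    ⨅ β : stdSimplex ℝ L, ∑ k, ∑ l, α k * A k l * β.1 l = colMin A α := by
  classical
  apply le_antisymm
  · obtain ⟨l₀, -, hl₀⟩ := Finset.exists_mem_eq_inf' (Finset.univ_nonempty)
      (fun l => ∑ k, α k * A k l)
    have hcm : colMin A α = ∑ k, α k * A k l₀ := hl₀
    rw [hcm]
    have hb : BddBelow (Set.range fun β : stdSimplex ℝ L =>
        ∑ k, ∑ l, α k * A k l * β.1 l) := by
      refine ⟨colMin A α, ?_⟩
      rintro y ⟨β, rfl⟩
      exact colMin_le_payoff A α β.2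
    refine le_trans (ciInf_le hb ⟨_, purePt_mem l₀⟩) ?_
    rw [payoff_eq_rows]
    exact le_of_eq (Finset.sum_congr rfl fun k _ => by rw [sum_mul_purePt l₀ (A k)])
  · exact le_ciInf fun β => colMin_le_payoff A α β.2

omit [Nonempty K] in
lemma colMin_continuous (A : Matrix K L ℝ) : Continuous (colMin A) := by
  apply Continuous.finset_inf'_apply
  intro l _
  exact continuous_finset_sum _ fun k _ => (continuous_apply k).mul continuous_const

omit [Nonempty L] in
lemma rowMax_continuous (A : Matrix K L ℝ) : Continuous (rowMax A) := by
  apply Continuous.finset_sup'_apply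
  intro k _
  exact continuous_finset_sum _ fun l _ => continuous_const.mul (continuous_apply l)

/-- Existence of an optimal strategy for player 1. -/
theorem exists_optimal_row (A : Matrix K L ℝ) :
    ∃ α ∈ stdSimplex ℝ K, ∀ l, matVal A ≤ ∑ k, α k * A k l := by
  classical
  obtain ⟨α, hαs, hmax⟩ := (isCompact_stdSimplex ℝ K).exists_isMaxOn
    ⟨_, purePt_mem (Classical.arbitrary K)⟩ (colMin_continuous A).continuousOn
  refine ⟨α, hαs, fun l => ?_⟩
  have h1 : matVal A ≤ colMin A α := by
    apply ciSup_le
    intro β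
    rw [iInf_payoff_eq]
    exact hmax β.2
  exact h1.trans (Finset.inf'_le _ (Finset.mem_univ l))

end Game

section Game2

variable {K L : Type*} [Fintype K] [Fintype L] [Nonempty K] [Nonempty L]

/-- Existence of an optimal strategy for player 2 (the minimax half). -/
theorem exists_optimal_col (A : Matrix K L ℝ) :
    ∃ β ∈ stdSimplex ℝ L, ∀ k, ∑ l, A k l * β l ≤ matVal A := by
  classical
  -- minimizer of rowMax over the simplex
  obtain ⟨β, hβs, hmin⟩ := (isCompact_stdSimplex ℝ L).exists_isMinOn
    ⟨_, purePt_mem (Classical.arbitrary L)⟩ (rowMax_continuous A).continuousOn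
  set v' : ℝ := rowMax A β with hv'
  refine ⟨β, hβs, fun k => le_trans (Finset.le_sup' (fun k => ∑ l, A k l * β l)
    (Finset.mem_univ k)) ?_⟩
  -- it suffices to show v' ≤ matVal A
  show v' ≤ matVal A
  -- the sets to separate
  set O : Set (K → ℝ) := ⋂ k, {y : K → ℝ | y k < v'} with hO
  set D : Set (K → ℝ) := (fun (b : L → ℝ) (k : K) => ∑ l, A k l * b l) '' stdSimplex ℝ L
    with hD
  have hOopen : IsOpen O := isOpen_iInter_of_finite fun k =>
    isOpen_lt (continuous_apply k) continuous_const
  have hOconv : Convex ℝ O := convex_iInter fun k =>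
    convex_halfSpace_lt ⟨fun _ _ => rfl, fun _ _ => rfl⟩ v'
  have hDconv : Convex ℝ D := by
    rintro y₁ ⟨b₁, hb₁, rfl⟩ y₂ ⟨b₂, hb₂, rfl⟩ a b ha hb hab
    refine ⟨a • b₁ + b • b₂, convex_stdSimplex ℝ L hb₁ hb₂ ha hb hab, ?_⟩
    funext k
    simp only [Pi.add_apply, Pi.smul_apply, smul_eq_mul]
    rw [Finset.mul_sum, Finset.mul_sum, ← Finset.sum_add_distrib]
    exact Finset.sum_congr rfl fun l _ => by ring
  have hdisj : Disjoint O D := by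
    rw [Set.disjoint_right]
    rintro y ⟨b, hb, rfl⟩ hyO
    have h1 : v' ≤ rowMax A b := hmin hb
    obtain ⟨k, -, hk⟩ := Finset.exists_mem_eq_sup' (Finset.univ_nonempty)
      (fun k => ∑ l, A k l * b l)
    have h2 : (fun k => ∑ l, A k l * b l) k < v' := Set.mem_iInter.1 hyO k
    rw [rowMax, hk] at h1
    exact absurd h1 (not_le.2 h2)
  obtain ⟨f, u, hfO, hfD⟩ := geometric_hahn_banach_open hOconv hOopen hDconv hdisj
  -- the coefficients of f
  set c : K → ℝ := fun k => f (purePt k) with hc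
  have hf_eq : ∀ y : K → ℝ, f y = ∑ k, y k * c k := by
    intro y
    have := LinearMap.pi_apply_eq_sum_univ (f.toLinearMap) y
    have h2 : ∀ i : K, f.toLinearMap (fun j => if i = j then 1 else 0) = c i := by
      intro i
      rw [hc]
      show f _ = f _
      congr 1
      funext j
      unfold purePt
      simp [eq_comm]
    calc f y = f.toLinearMap y := rfl
      _ = ∑ i, y i • f.toLinearMap (fun j => if i = j then 1 else 0) := this
      _ = ∑ i, y i * c i := Finset.sum_congr rfl fun i _ => by rw [h2 i, smul_eq_mul]
  -- basic points
  have hy0 : (fun _ => v' - 1 : K → ℝ) ∈ O :=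
    Set.mem_iInter.2 fun k => by simp
  have hOne : ∀ δ : ℝ, 0 < δ → (fun _ => v' - δ : K → ℝ) ∈ O :=
    fun δ hδ => Set.mem_iInter.2 fun k => by simpa using hδ
  -- nonnegativity of c
  have hc0 : ∀ k, 0 ≤ c k := by
    intro k
    by_contra hneg
    push_neg at hneg
    -- point pushed down in coordinate k stays in O
    have hmem : ∀ M : ℝ, 0 ≤ M → ((fun _ => v' - 1) - M • purePt k : K → ℝ) ∈ O := by
      intro M hM
      refine Set.mem_iInter.2 fun j => ?_
      have : (0:ℝ) ≤ M * purePt k j := by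
        apply mul_nonneg hM
        unfold purePt; split <;> norm_num
      simp only [Pi.sub_apply, Pi.smul_apply, smul_eq_mul, Set.mem_setOf_eq]
      linarith
    have hval : ∀ M : ℝ, f ((fun _ => v' - 1) - M • purePt k : K → ℝ)
        = f (fun _ => v' - 1) - M * c k := by
      intro M
      rw [map_sub, f.map_smul]
      simp [hc, smul_eq_mul]
    have hub : ∀ M : ℝ, 0 ≤ M → M * (-(c k)) < u - f (fun _ => v' - 1) := by
      intro M hM
      have := hfO _ (hmem M hM)
      rw [hval M] at this
      linarith
    have h0 : (0:ℝ) < u - f (fun _ => v' - 1) := by simpa using hub 0 le_rfl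
    have hck : (0:ℝ) < -(c k) := by linarith
    have := hub ((u - f (fun _ => v' - 1)) / (-(c k))) (le_of_lt (div_pos h0 hck))
    rw [div_mul_cancel₀ _ (ne_of_gt hck)] at this
    exact lt_irrefl _ this
  -- the total mass is positive
  set S : ℝ := ∑ k, c k with hS
  have hS0 : 0 ≤ S := Finset.sum_nonneg fun k _ => hc0 k
  have hSpos : 0 < S := by
    rcases lt_or_eq_of_le hS0 with h | h
    · exact h
    · exfalso
      have hzero : ∀ k, c k = 0 := by
        intro k
        have := (Finset.sum_eq_zero_iff_of_nonneg (fun k _ => hc0 k)).1 h.symm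
        exact this k (Finset.mem_univ k)
      have hfzero : ∀ y : K → ℝ, f y = 0 := by
        intro y; rw [hf_eq]; simp [hzero]
      have h1 : (0:ℝ) < u := by
        have := hfO _ hy0; rwa [hfzero] at this
      obtain ⟨β₀⟩ := stdSimplex_nonempty' (ι := L)
      have h2 : u ≤ 0 := by
        have := hfD _ ⟨β₀.1, β₀.2, rfl⟩
        rwa [hfzero] at this
      linarith
  -- u is at least v' * S
  have huS : v' * S ≤ u := by
    apply le_of_forall_pos_lt_add
    intro δ hδ
    have hmem := hOne (δ / S) (div_pos hδ hSpos)
    have := hfO _ hmem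
    rw [hf_eq] at this
    have heq : ∑ k, (v' - δ / S) * c k = v' * S - δ := by
      rw [← Finset.mul_sum, ← hS]
      field_simp
    rw [heq] at this
    linarith
  -- columns of A are in D
  have hcol : ∀ l, u ≤ ∑ k, A k l * c k := by
    intro l
    have hmem : (fun k => A k l) ∈ D := by
      refine ⟨purePt l, purePt_mem l, ?_⟩
      funext k
      exact sum_mul_purePt l (A k)
    have := hfD _ hmem
    rwa [hf_eq] at this
  -- the normalized strategy
  set αb : K → ℝ := fun k => c k / S with hαb
  have hαbmem : αb ∈ stdSimplex ℝ K := by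
    constructor
    · intro k; exact div_nonneg (hc0 k) hS0
    · rw [← Finset.sum_div]
      exact div_self (ne_of_gt hSpos)
  have hαbcol : ∀ l, v' ≤ ∑ k, αb k * A k l := by
    intro l
    have h1 : v' * S ≤ ∑ k, A k l * c k := le_trans huS (hcol l)
    have h2 : ∑ k, αb k * A k l = (∑ k, A k l * c k) / S := by
      rw [Finset.sum_div]
      exact Finset.sum_congr rfl fun k _ => by rw [hαb]; ring
    rw [h2, le_div_iff₀ hSpos]
    linarith
  -- conclude via matVal
  have hBdd : BddAbove (Set.range fun α : stdSimplex ℝ K =>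
      ⨅ β : stdSimplex ℝ L, ∑ k, ∑ l, α.1 k * A k l * β.1 l) := by
    refine ⟨Finset.univ.sup' Finset.univ_nonempty
      (fun kl : K × L => A kl.1 kl.2), ?_⟩
    rintro y ⟨α, rfl⟩
    dsimp only
    rw [iInf_payoff_eq]
    obtain ⟨l₀, -, hl₀⟩ := Finset.exists_mem_eq_inf' (Finset.univ_nonempty)
      (fun l => ∑ k, α.1 k * A k l)
    have hcm : colMin A α.1 = ∑ k, α.1 k * A k l₀ := hl₀
    rw [hcm]
    exact simplex_combo_le α.2 fun k =>
      Finset.le_sup' (fun kl : K × L => A kl.1 kl.2) (Finset.mem_univ (k, l₀))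
  have : v' ≤ ⨅ β : stdSimplex ℝ L, ∑ k, ∑ l, αb k * A k l * β.1 l := by
    rw [iInf_payoff_eq]
    exact Finset.le_inf' _ _ fun l _ => hαbcol l
  exact le_trans this (le_ciSup hBdd ⟨αb, hαbmem⟩)

end Game2


section SumAux

lemma sum_biUnion_le_sum_sum {ι κ : Type*} [DecidableEq κ] (s : Finset ι)
    (t : ι → Finset κ) (f : κ → ℝ) (hf : ∀ x, 0 ≤ f x) :
    ∑ x ∈ s.biUnion t, f x ≤ ∑ i ∈ s, ∑ x ∈ t i, f x := by
  classical
  induction s using Finset.induction with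
  | empty => simp
  | insert a s' h ih =>
    rw [Finset.biUnion_insert, Finset.sum_insert h]
    have h1 : ∑ x ∈ t a ∪ s'.biUnion t, f x ≤ ∑ x ∈ t a, f x + ∑ x ∈ s'.biUnion t, f x := by
      have h2 := Finset.sum_union_inter (s₁ := t a) (s₂ := s'.biUnion t) (f := f)
      have h3 : 0 ≤ ∑ x ∈ t a ∩ s'.biUnion t, f x := Finset.sum_nonneg fun x _ => hf x
      linarith
    exact le_trans h1 (by linarith)

end SumAux

section Decomp

variable {V : Type*} [Fintype V] [DecidableEq V] [Nonempty V]
  {K L : V → Type*} [∀ v, Fintype (K v)] [∀ v, Nonempty (K v)]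
  [∀ v, Fintype (L v)] [∀ v, Nonempty (L v)]

lemma locMat_eq_atil_add (p r : ∀ v : V, K v → L v → V → ℝ) (x : V → ℝ) (v : V)
    (k : K v) (l : L v) :
    locMat p r x v k l = atil p r x v k l +
      ∑ u, (if x u ≤ x v then 0 else p v k l u * (x v - x u)) := by
  unfold locMat atil
  simp only [Matrix.of_apply]
  rw [add_assoc, ← Finset.sum_add_distrib, ← Finset.sum_add_distrib]
  refine Finset.sum_congr rfl fun u _ => ?_
  split <;> ring

lemma locMat_eq_btil_sub (p r : ∀ v : V, K v → L v → V → ℝ) (x : V → ℝ) (v : V)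
    (k : K v) (l : L v) :
    locMat p r x v k l = (mplus p r x - btil p r x v k l) +
      ∑ u, (if x v ≤ x u then 0 else p v k l u * (x v - x u)) := by
  have h : mplus p r x - btil p r x v k l = (∑ u, p v k l u * r v k l u) +
      ∑ u, (if x v ≤ x u then p v k l u * (x v - x u) else 0) := by
    unfold btil; ring
  rw [h]
  unfold locMat
  simp only [Matrix.of_apply]
  rw [add_assoc, ← Finset.sum_add_distrib, ← Finset.sum_add_distrib]
  refine Finset.sum_congr rfl fun u _ => ?_
  split <;> ring

end Decomp

section Decomp2

variable {V : Type*} [Fintype V] [DecidableEq V] [Nonempty V]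
  {K L : V → Type*} [∀ v, Fintype (K v)] [∀ v, Nonempty (K v)]
  [∀ v, Fintype (L v)] [∀ v, Nonempty (L v)]

set_option maxHeartbeats 1000000 in
lemma exists_good_I (p r : ∀ v : V, K v → L v → V → ℝ)
    (hp0 : ∀ v k l u, 0 ≤ p v k l u)
    (W : ℝ) (hW : 0 < W) (hpW : ∀ v k l u, p v k l u ≠ 0 → 1 / W ≤ p v k l u)
    (ε : ℝ) (hε : 0 < ε) (x : V → ℝ) (I : Set V)
    (a' b' : ℝ) (ha'0 : 0 ≤ a') (hgap : 3 * ε ≤ b' - a')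
    (hb'mid : (mplus p r x + mminus p r x) / 2 ≤ b')
    (hN4a : ∀ v ∈ I, b' ≤ locVal p r x v)
    (hN5 : ∀ u ∉ I, ∀ v ∈ I,
      (Fintype.card (L v) : ℝ) * W * (Rval p r x v) ^ 2 / ε ≤ x u - x v) :
    ∀ v : V, ∃ a : K v → ℝ, v ∈ I →
      (a ∈ stdSimplex ℝ (K v) ∧ (∀ u ∉ I, ∀ k l, a k * p v k l u = 0) ∧
       ∀ βt ∈ stdSimplex ℝ (L v), b' - ε ≤ ∑ k, ∑ l, a k * locMat p r x v k l * βt l) := by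
  classical
  intro v
  by_cases hv : v ∈ I
  swap
  · exact ⟨fun _ => 0, fun h => absurd h hv⟩
  set A := locMat p r x v with hA
  set R := Rval p r x v with hR
  have hmv : b' ≤ matVal A := hN4a v hv
  have hRdef : R = (Finset.univ : Finset (K v × L v)).sup' Finset.univ_nonempty
      (fun kl => atil p r x v kl.1 kl.2) := if_pos (le_trans hb'mid (hN4a v hv))
  have hAatil : ∀ k l, A k l ≤ atil p r x v k l := by
    intro k l
    rw [hA, locMat_eq_atil_add]
    have h1 : ∑ u, (if x u ≤ x v then 0 else p v k l u * (x v - x u)) ≤ 0 := by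
      refine Finset.sum_nonpos fun u _ => ?_
      split
      · exact le_refl 0
      · rename_i hxu
        push_neg at hxu
        exact mul_nonpos_of_nonneg_of_nonpos (hp0 v k l u) (by linarith)
    linarith
  have hatR : ∀ k l, atil p r x v k l ≤ R := by
    intro k l
    rw [hRdef]
    exact Finset.le_sup' (fun kl : K v × L v => atil p r x v kl.1 kl.2)
      (Finset.mem_univ (k, l))
  have hAR : ∀ k l, A k l ≤ R := fun k l => le_trans (hAatil k l) (hatR k l)
  obtain ⟨ah, ahs, hah⟩ := exists_optimal_row A
  have hmR : matVal A ≤ R := by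
    obtain ⟨l₀⟩ := (inferInstance : Nonempty (L v))
    exact le_trans (hah l₀) (simplex_combo_le ahs fun k => hAR k l₀)
  have hR3 : 3 * ε ≤ R := by linarith [hN4a v hv, hmv]
  have hR0 : 0 < R := by linarith
  have hcard : (0:ℝ) < (Fintype.card (L v) : ℝ) := by
    exact_mod_cast Fintype.card_pos
  set Q : ℝ := (Fintype.card (L v) : ℝ) * R ^ 2 / ε with hQ
  have hQ0 : 0 < Q := by
    apply div_pos _ hε
    exact mul_pos hcard (pow_pos hR0 2)
  have hleave : ∀ k l u, u ∉ I → p v k l u ≠ 0 → A k l ≤ R - Q := by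
    intro k l u hu hpu
    have hx : (Fintype.card (L v) : ℝ) * W * R ^ 2 / ε ≤ x u - x v := hN5 u hu v hv
    have hWQ : (Fintype.card (L v) : ℝ) * W * R ^ 2 / ε = W * Q := by
      rw [hQ]; ring
    have hxvu : x v < x u := by
      have : 0 < W * Q := mul_pos hW hQ0
      rw [hWQ] at hx; linarith
    have hterm : p v k l u * (x v - x u) ≤ -Q := by
      have h1 : p v k l u * (x v - x u) ≤ p v k l u * (-(W * Q)) := by
        apply mul_le_mul_of_nonneg_left _ (hp0 v k l u)
        rw [hWQ] at hx; linarith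
      have h2 : p v k l u * (-(W * Q)) ≤ (1 / W) * (-(W * Q)) := by
        apply mul_le_mul_of_nonpos_right (hpW v k l u hpu)
        have : 0 < W * Q := mul_pos hW hQ0
        linarith
      have h3 : (1 / W) * (-(W * Q)) = -Q := by
        field_simp
      linarith
    rw [hA, locMat_eq_atil_add]
    have hsum : ∑ u', (if x u' ≤ x v then 0 else p v k l u' * (x v - x u'))
        ≤ -Q := by
      rw [← Finset.add_sum_erase _ _ (Finset.mem_univ u)]
      have h4 : (if x u ≤ x v then 0 else p v k l u * (x v - x u)) ≤ -Q := by
        rw [if_neg (by linarith)]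
        exact hterm
      have h5 : ∑ u' ∈ Finset.univ.erase u,
          (if x u' ≤ x v then 0 else p v k l u' * (x v - x u')) ≤ 0 := by
        refine Finset.sum_nonpos fun u' _ => ?_
        split
        · exact le_refl 0
        · rename_i hxu
          push_neg at hxu
          exact mul_nonpos_of_nonneg_of_nonpos (hp0 v k l u') (by linarith)
      linarith
    linarith [hatR k l]
  -- the leaving action sets
  set Zl : L v → Finset (K v) :=
    fun l => Finset.univ.filter (fun k => ∃ u, u ∉ I ∧ p v k l u ≠ 0) with hZl
  set Z : Finset (K v) :=
    Finset.univ.filter (fun k => ∃ l u, u ∉ I ∧ p v k l u ≠ 0) with hZ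
  set s : ℝ := ∑ k ∈ Z, ah k with hs
  have hTl : ∀ l, ∑ k ∈ Zl l, ah k ≤ ε / ((Fintype.card (L v) : ℝ) * R) := by
    intro l
    set T := ∑ k ∈ Zl l, ah k with hT
    have hT0 : 0 ≤ T := Finset.sum_nonneg fun k _ => ahs.1 k
    have h1 : b' ≤ ∑ k, ah k * A k l := le_trans hmv (hah l)
    have hsplit : ∑ k ∈ Zl l, ah k * A k l +
        ∑ k ∈ Finset.univ.filter (fun k => ¬ ∃ u, u ∉ I ∧ p v k l u ≠ 0), ah k * A k l
        = ∑ k, ah k * A k l := by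
      rw [hZl]
      exact Finset.sum_filter_add_sum_filter_not _ _ _
    have hTsplit : T + ∑ k ∈ Finset.univ.filter
        (fun k => ¬ ∃ u, u ∉ I ∧ p v k l u ≠ 0), ah k = 1 := by
      rw [hT, hZl]
      rw [Finset.sum_filter_add_sum_filter_not _ _ _]
      exact ahs.2
    have h2 : ∑ k ∈ Zl l, ah k * A k l ≤ T * (R - Q) := by
      rw [hT, Finset.sum_mul]
      refine Finset.sum_le_sum fun k hk => ?_
      obtain ⟨u, hu, hpu⟩ := (Finset.mem_filter.1 hk).2
      exact mul_le_mul_of_nonneg_left (hleave k l u hu hpu) (ahs.1 k)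
    have h3 : ∑ k ∈ Finset.univ.filter (fun k => ¬ ∃ u, u ∉ I ∧ p v k l u ≠ 0),
        ah k * A k l ≤ (1 - T) * R := by
      have := hTsplit
      calc ∑ k ∈ Finset.univ.filter (fun k => ¬ ∃ u, u ∉ I ∧ p v k l u ≠ 0),
          ah k * A k l
          ≤ ∑ k ∈ Finset.univ.filter (fun k => ¬ ∃ u, u ∉ I ∧ p v k l u ≠ 0),
            ah k * R :=
            Finset.sum_le_sum fun k _ => mul_le_mul_of_nonneg_left (hAR k l) (ahs.1 k)
        _ = (1 - T) * R := by rw [← Finset.sum_mul]; rw [show ∑ k ∈ Finset.univ.filter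
            (fun k => ¬ ∃ u, u ∉ I ∧ p v k l u ≠ 0), ah k = 1 - T by linarith]
    have h4 : T * Q ≤ R := by nlinarith
    have h5 : T ≤ R / Q := (le_div_iff₀ hQ0).2 h4
    have h6 : R / Q = ε / ((Fintype.card (L v) : ℝ) * R) := by
      rw [hQ]
      field_simp
    linarith
  have hsle : s ≤ ε / R := by
    have hsub : Z ⊆ Finset.univ.biUnion Zl := by
      intro k hk
      obtain ⟨l, u, hu, hpu⟩ := (Finset.mem_filter.1 hk).2
      exact Finset.mem_biUnion.2 ⟨l, Finset.mem_univ l,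
        Finset.mem_filter.2 ⟨Finset.mem_univ k, ⟨u, hu, hpu⟩⟩⟩
    have h1 : s ≤ ∑ k ∈ Finset.univ.biUnion Zl, ah k :=
      Finset.sum_le_sum_of_subset_of_nonneg hsub fun k _ _ => ahs.1 k
    have h2 : ∑ k ∈ Finset.univ.biUnion Zl, ah k ≤ ∑ l, ∑ k ∈ Zl l, ah k :=
      sum_biUnion_le_sum_sum _ _ _ (ahs.1)
    have h3 : ∑ l, ∑ k ∈ Zl l, ah k ≤
        ∑ _l : L v, ε / ((Fintype.card (L v) : ℝ) * R) :=
      Finset.sum_le_sum fun l _ => hTl l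
    have h4 : ∑ _l : L v, ε / ((Fintype.card (L v) : ℝ) * R) = ε / R := by
      rw [Finset.sum_const, Finset.card_univ, nsmul_eq_mul]
      field_simp
    linarith
  have hsR : s * R ≤ ε := by
    calc s * R ≤ (ε / R) * R := mul_le_mul_of_nonneg_right hsle (le_of_lt hR0)
      _ = ε := by field_simp
  have hs0 : 0 ≤ s := Finset.sum_nonneg fun k _ => ahs.1 k
  have hs13 : s ≤ 1 / 3 := by
    have h1 : ε / R ≤ 1 / 3 := by
      rw [div_le_div_iff₀ hR0 (by norm_num : (0:ℝ) < 3)]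
      linarith
    linarith
  have h1s : 0 < 1 - s := by linarith
  refine ⟨fun k => if k ∈ Z then 0 else ah k / (1 - s), fun _ => ?_⟩
  have hsumZ : ∑ k ∈ Finset.univ.filter (· ∈ Z), ah k = s := by
    rw [Finset.filter_mem_eq_inter, Finset.univ_inter]
  have hsumnotZ : ∑ k ∈ Finset.univ.filter (· ∉ Z), ah k = 1 - s := by
    have := Finset.sum_filter_add_sum_filter_not Finset.univ (· ∈ Z) ah
    rw [hsumZ] at this
    rw [ahs.2] at this
    linarith
  have hmem : (fun k => if k ∈ Z then 0 else ah k / (1 - s)) ∈ stdSimplex ℝ (K v) := by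
    constructor
    · intro k
      show 0 ≤ if k ∈ Z then (0:ℝ) else ah k / (1 - s)
      split
      · exact le_rfl
      · exact div_nonneg (ahs.1 k) (le_of_lt h1s)
    · show (∑ k, if k ∈ Z then (0:ℝ) else ah k / (1 - s)) = 1
      rw [Finset.sum_ite]
      rw [Finset.sum_const_zero, zero_add, ← Finset.sum_div, hsumnotZ]
      field_simp
  refine ⟨hmem, ?_, ?_⟩
  · intro u hu k l
    show (if k ∈ Z then (0:ℝ) else ah k / (1 - s)) * p v k l u = 0
    by_cases hk : k ∈ Z
    · rw [if_pos hk, zero_mul]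
    · have : p v k l u = 0 := by
        by_contra hpu
        exact hk (Finset.mem_filter.2 ⟨Finset.mem_univ k, ⟨l, u, hu, hpu⟩⟩)
      rw [this, mul_zero]
  · intro βt hβt
    have hcol : ∀ l, b' - ε ≤ ∑ k, (if k ∈ Z then 0 else ah k / (1 - s)) * A k l := by
      intro l
      have h1 : b' ≤ ∑ k, ah k * A k l := le_trans hmv (hah l)
      have hsplit : ∑ k ∈ Finset.univ.filter (· ∈ Z), ah k * A k l +
          ∑ k ∈ Finset.univ.filter (· ∉ Z), ah k * A k l = ∑ k, ah k * A k l :=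
        Finset.sum_filter_add_sum_filter_not _ _ _
      have h2 : ∑ k ∈ Finset.univ.filter (· ∈ Z), ah k * A k l ≤ s * R := by
        calc ∑ k ∈ Finset.univ.filter (· ∈ Z), ah k * A k l
            ≤ ∑ k ∈ Finset.univ.filter (· ∈ Z), ah k * R :=
            Finset.sum_le_sum fun k _ => mul_le_mul_of_nonneg_left (hAR k l) (ahs.1 k)
          _ = s * R := by rw [← Finset.sum_mul, hsumZ]
      have hnum : b' - ε ≤ ∑ k ∈ Finset.univ.filter (· ∉ Z), ah k * A k l := by
        linarith
      have heq : ∑ k, (if k ∈ Z then 0 else ah k / (1 - s)) * A k l =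
          (∑ k ∈ Finset.univ.filter (· ∉ Z), ah k * A k l) / (1 - s) := by
        have hterm : ∀ k, (if k ∈ Z then 0 else ah k / (1 - s)) * A k l =
            if k ∈ Z then 0 else (ah k * A k l) / (1 - s) := by
          intro k; split
          · ring
          · ring
        rw [Finset.sum_congr rfl fun k _ => hterm k]
        rw [Finset.sum_ite, Finset.sum_const_zero, zero_add, ← Finset.sum_div]
      rw [heq, le_div_iff₀ h1s]
      nlinarith
    rw [payoff_eq_cols]
    exact le_simplex_combo hβt hcol


set_option maxHeartbeats 1000000 in
lemma exists_good_F (p r : ∀ v : V, K v → L v → V → ℝ)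
    (hp0 : ∀ v k l u, 0 ≤ p v k l u)
    (W : ℝ) (hW : 0 < W) (hpW : ∀ v k l u, p v k l u ≠ 0 → 1 / W ≤ p v k l u)
    (ε : ℝ) (hε : 0 < ε) (x : V → ℝ) (F : Set V)
    (a' b' : ℝ) (ha'le : a' ≤ mplus p r x) (hb'le : b' ≤ mplus p r x)
    (hgap : 3 * ε ≤ b' - a')
    (ha'mid : a' < (mplus p r x + mminus p r x) / 2)
    (hN4b : ∀ u ∈ F, locVal p r x u < a')
    (hN6 : ∀ u ∈ F, ∀ v ∉ F,
      (Fintype.card (K u) : ℝ) * W * (Rval p r x u) ^ 2 / ε ≤ x u - x v) :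
    ∀ u : V, ∃ b : L u → ℝ, u ∈ F →
      (b ∈ stdSimplex ℝ (L u) ∧ (∀ w ∉ F, ∀ k l, b l * p u k l w = 0) ∧
       ∀ αt ∈ stdSimplex ℝ (K u), ∑ k, ∑ l, αt k * locMat p r x u k l * b l < a' + ε) := by
  classical
  intro u
  by_cases hu : u ∈ F
  swap
  · exact ⟨fun _ => 0, fun h => absurd h hu⟩
  set A := locMat p r x u with hA
  set R := Rval p r x u with hR
  have hmv : matVal A < a' := hN4b u hu
  have hRdef : R = (Finset.univ : Finset (K u × L u)).sup' Finset.univ_nonempty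
      (fun kl => btil p r x u kl.1 kl.2) :=
    if_neg (not_le.2 (lt_trans (hN4b u hu) ha'mid))
  have hAbtil : ∀ k l, mplus p r x - btil p r x u k l ≤ A k l := by
    intro k l
    rw [hA, locMat_eq_btil_sub]
    have h1 : 0 ≤ ∑ w, (if x u ≤ x w then 0 else p u k l w * (x u - x w)) := by
      refine Finset.sum_nonneg fun w _ => ?_
      split
      · exact le_rfl
      · rename_i hxw
        push_neg at hxw
        exact mul_nonneg (hp0 u k l w) (by linarith)
    linarith
  have hbtR : ∀ k l, btil p r x u k l ≤ R := by
    intro k l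
    rw [hRdef]
    exact Finset.le_sup' (fun kl : K u × L u => btil p r x u kl.1 kl.2)
      (Finset.mem_univ (k, l))
  have hAmR : ∀ k l, mplus p r x - R ≤ A k l :=
    fun k l => le_trans (by linarith [hbtR k l]) (hAbtil k l)
  obtain ⟨bh, bhs, hbh⟩ := exists_optimal_col A
  have hR3 : 3 * ε < R := by
    obtain ⟨k₀⟩ := (inferInstance : Nonempty (K u))
    obtain ⟨l₀, -, hl₀⟩ := Finset.exists_mem_eq_inf' (Finset.univ_nonempty)
      (fun l => A k₀ l)
    have h1 : ∑ l, A k₀ l * bh l = ∑ l, bh l * A k₀ l :=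
      Finset.sum_congr rfl fun l _ => mul_comm _ _
    have h2 : Finset.univ.inf' Finset.univ_nonempty (fun l => A k₀ l) ≤ matVal A := by
      refine le_trans ?_ (hbh k₀)
      rw [h1]
      exact le_simplex_combo bhs fun l => Finset.inf'_le _ (Finset.mem_univ l)
    rw [hl₀] at h2
    have h3 : A k₀ l₀ < a' := lt_of_le_of_lt h2 hmv
    have h4 : mplus p r x - A k₀ l₀ ≤ btil p r x u k₀ l₀ := by
      linarith [hAbtil k₀ l₀]
    have h5 := hbtR k₀ l₀
    linarith
  have hR0 : 0 < R := by linarith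
  have hcard : (0:ℝ) < (Fintype.card (K u) : ℝ) := by
    exact_mod_cast Fintype.card_pos
  set Q : ℝ := (Fintype.card (K u) : ℝ) * R ^ 2 / ε with hQ
  have hQ0 : 0 < Q := by
    apply div_pos _ hε
    exact mul_pos hcard (pow_pos hR0 2)
  have hleave : ∀ k l w, w ∉ F → p u k l w ≠ 0 →
      mplus p r x - R + Q ≤ A k l := by
    intro k l w hw hpw
    have hx : (Fintype.card (K u) : ℝ) * W * R ^ 2 / ε ≤ x u - x w := hN6 u hu w hw
    have hWQ : (Fintype.card (K u) : ℝ) * W * R ^ 2 / ε = W * Q := by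
      rw [hQ]; ring
    have hWQ0 : 0 < W * Q := mul_pos hW hQ0
    have hxwu : x w < x u := by rw [hWQ] at hx; linarith
    have hterm : Q ≤ p u k l w * (x u - x w) := by
      have h1 : p u k l w * (W * Q) ≤ p u k l w * (x u - x w) := by
        apply mul_le_mul_of_nonneg_left _ (hp0 u k l w)
        rw [hWQ] at hx; linarith
      have h2 : (1 / W) * (W * Q) ≤ p u k l w * (W * Q) :=
        mul_le_mul_of_nonneg_right (hpW u k l w hpw) (le_of_lt hWQ0)
      have h3 : (1 / W) * (W * Q) = Q := by
        field_simp
      linarith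
    rw [hA, locMat_eq_btil_sub]
    have hsum : Q ≤ ∑ w', (if x u ≤ x w' then 0 else p u k l w' * (x u - x w')) := by
      refine le_trans ?_ (Finset.single_le_sum (f := fun w' =>
        (if x u ≤ x w' then 0 else p u k l w' * (x u - x w'))) ?_ (Finset.mem_univ w))
      · show Q ≤ if x u ≤ x w then 0 else p u k l w * (x u - x w)
        rw [if_neg (by linarith : ¬ x u ≤ x w)]
        exact hterm
      · intro w' _
        show 0 ≤ if x u ≤ x w' then 0 else p u k l w' * (x u - x w')
        split
        · exact le_rfl
        · rename_i hxw'
          push_neg at hxw'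
          exact mul_nonneg (hp0 u k l w') (by linarith)
    linarith [hbtR k l]
  set Zk : K u → Finset (L u) :=
    fun k => Finset.univ.filter (fun l => ∃ w, w ∉ F ∧ p u k l w ≠ 0) with hZk
  set Z : Finset (L u) :=
    Finset.univ.filter (fun l => ∃ k w, w ∉ F ∧ p u k l w ≠ 0) with hZ
  set s : ℝ := ∑ l ∈ Z, bh l with hs
  have hTk : ∀ k, ∑ l ∈ Zk k, bh l ≤ ε / ((Fintype.card (K u) : ℝ) * R) := by
    intro k
    set T := ∑ l ∈ Zk k, bh l with hT
    have hT0 : 0 ≤ T := Finset.sum_nonneg fun l _ => bhs.1 l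
    have h1 : ∑ l, A k l * bh l < a' := lt_of_le_of_lt (hbh k) hmv
    have hsplit : ∑ l ∈ Zk k, A k l * bh l +
        ∑ l ∈ Finset.univ.filter (fun l => ¬ ∃ w, w ∉ F ∧ p u k l w ≠ 0), A k l * bh l
        = ∑ l, A k l * bh l := by
      rw [hZk]
      exact Finset.sum_filter_add_sum_filter_not _ _ _
    have hTsplit : T + ∑ l ∈ Finset.univ.filter
        (fun l => ¬ ∃ w, w ∉ F ∧ p u k l w ≠ 0), bh l = 1 := by
      rw [hT, hZk]
      rw [Finset.sum_filter_add_sum_filter_not _ _ _]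
      exact bhs.2
    have h2 : T * (mplus p r x - R + Q) ≤ ∑ l ∈ Zk k, A k l * bh l := by
      rw [hT, Finset.sum_mul]
      refine Finset.sum_le_sum fun l hl => ?_
      obtain ⟨w, hw, hpw⟩ := (Finset.mem_filter.1 hl).2
      rw [mul_comm (bh l)]
      exact mul_le_mul_of_nonneg_right (hleave k l w hw hpw) (bhs.1 l)
    have h3 : (1 - T) * (mplus p r x - R) ≤
        ∑ l ∈ Finset.univ.filter (fun l => ¬ ∃ w, w ∉ F ∧ p u k l w ≠ 0),
          A k l * bh l := by
      have heq : ∑ l ∈ Finset.univ.filter (fun l => ¬ ∃ w, w ∉ F ∧ p u k l w ≠ 0),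
          bh l = 1 - T := by linarith
      calc (1 - T) * (mplus p r x - R)
          = ∑ l ∈ Finset.univ.filter (fun l => ¬ ∃ w, w ∉ F ∧ p u k l w ≠ 0),
            bh l * (mplus p r x - R) := by rw [← Finset.sum_mul, heq]
        _ ≤ ∑ l ∈ Finset.univ.filter (fun l => ¬ ∃ w, w ∉ F ∧ p u k l w ≠ 0),
            A k l * bh l := by
            refine Finset.sum_le_sum fun l _ => ?_
            rw [mul_comm (bh l)]
            exact mul_le_mul_of_nonneg_right (hAmR k l) (bhs.1 l)
    have h4 : T * Q ≤ R := by nlinarith [ha'le]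
    have h5 : T ≤ R / Q := (le_div_iff₀ hQ0).2 h4
    have h6 : R / Q = ε / ((Fintype.card (K u) : ℝ) * R) := by
      rw [hQ]
      field_simp
    linarith
  have hsle : s ≤ ε / R := by
    have hsub : Z ⊆ Finset.univ.biUnion Zk := by
      intro l hl
      obtain ⟨k, w, hw, hpw⟩ := (Finset.mem_filter.1 hl).2
      exact Finset.mem_biUnion.2 ⟨k, Finset.mem_univ k,
        Finset.mem_filter.2 ⟨Finset.mem_univ l, ⟨w, hw, hpw⟩⟩⟩
    have h1 : s ≤ ∑ l ∈ Finset.univ.biUnion Zk, bh l :=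
      Finset.sum_le_sum_of_subset_of_nonneg hsub fun l _ _ => bhs.1 l
    have h2 : ∑ l ∈ Finset.univ.biUnion Zk, bh l ≤ ∑ k, ∑ l ∈ Zk k, bh l :=
      sum_biUnion_le_sum_sum _ _ _ (bhs.1)
    have h3 : ∑ k, ∑ l ∈ Zk k, bh l ≤
        ∑ _k : K u, ε / ((Fintype.card (K u) : ℝ) * R) :=
      Finset.sum_le_sum fun k _ => hTk k
    have h4 : ∑ _k : K u, ε / ((Fintype.card (K u) : ℝ) * R) = ε / R := by
      rw [Finset.sum_const, Finset.card_univ, nsmul_eq_mul]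
      field_simp
    linarith
  have hsR : s * R ≤ ε := by
    calc s * R ≤ (ε / R) * R := mul_le_mul_of_nonneg_right hsle (le_of_lt hR0)
      _ = ε := by field_simp
  have hs0 : 0 ≤ s := Finset.sum_nonneg fun l _ => bhs.1 l
  have hs13 : s ≤ 1 / 3 := by
    have h1 : ε / R ≤ 1 / 3 := by
      rw [div_le_div_iff₀ hR0 (by norm_num : (0:ℝ) < 3)]
      linarith
    linarith
  have h1s : 0 < 1 - s := by linarith
  refine ⟨fun l => if l ∈ Z then 0 else bh l / (1 - s), fun _ => ?_⟩
  have hsumZ : ∑ l ∈ Finset.univ.filter (· ∈ Z), bh l = s := by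
    rw [Finset.filter_mem_eq_inter, Finset.univ_inter]
  have hsumnotZ : ∑ l ∈ Finset.univ.filter (· ∉ Z), bh l = 1 - s := by
    have := Finset.sum_filter_add_sum_filter_not Finset.univ (· ∈ Z) bh
    rw [hsumZ] at this
    rw [bhs.2] at this
    linarith
  have hmem : (fun l => if l ∈ Z then 0 else bh l / (1 - s)) ∈ stdSimplex ℝ (L u) := by
    constructor
    · intro l
      show 0 ≤ if l ∈ Z then (0:ℝ) else bh l / (1 - s)
      split
      · exact le_rfl
      · exact div_nonneg (bhs.1 l) (le_of_lt h1s)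
    · show (∑ l, if l ∈ Z then (0:ℝ) else bh l / (1 - s)) = 1
      rw [Finset.sum_ite]
      rw [Finset.sum_const_zero, zero_add, ← Finset.sum_div, hsumnotZ]
      field_simp
  refine ⟨hmem, ?_, ?_⟩
  · intro w hw k l
    show (if l ∈ Z then (0:ℝ) else bh l / (1 - s)) * p u k l w = 0
    by_cases hl : l ∈ Z
    · rw [if_pos hl, zero_mul]
    · have : p u k l w = 0 := by
        by_contra hpw
        exact hl (Finset.mem_filter.2 ⟨Finset.mem_univ l, ⟨k, w, hw, hpw⟩⟩)
      rw [this, mul_zero]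
  · intro αt hαt
    have hmba : a' + ε ≤ mplus p r x := by linarith
    have hrow : ∀ k, ∑ l, A k l * (if l ∈ Z then 0 else bh l / (1 - s)) < a' + ε := by
      intro k
      have heq : ∑ l, A k l * (if l ∈ Z then 0 else bh l / (1 - s)) =
          (∑ l ∈ Finset.univ.filter (· ∉ Z), A k l * bh l) / (1 - s) := by
        have hterm : ∀ l, A k l * (if l ∈ Z then 0 else bh l / (1 - s)) =
            if l ∈ Z then 0 else (A k l * bh l) / (1 - s) := by
          intro l; split
          · ring
          · ring
        rw [Finset.sum_congr rfl fun l _ => hterm l]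
        rw [Finset.sum_ite, Finset.sum_const_zero, zero_add, ← Finset.sum_div]
      have hsplit : ∑ l ∈ Finset.univ.filter (· ∈ Z), A k l * bh l +
          ∑ l ∈ Finset.univ.filter (· ∉ Z), A k l * bh l = ∑ l, A k l * bh l :=
        Finset.sum_filter_add_sum_filter_not _ _ _
      have h1 : ∑ l, A k l * bh l < a' := lt_of_le_of_lt (hbh k) hmv
      have h2 : s * (mplus p r x - R) ≤
          ∑ l ∈ Finset.univ.filter (· ∈ Z), A k l * bh l := by
        calc s * (mplus p r x - R)
            = ∑ l ∈ Finset.univ.filter (· ∈ Z), bh l * (mplus p r x - R) := by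
              rw [← Finset.sum_mul, hsumZ]
          _ ≤ ∑ l ∈ Finset.univ.filter (· ∈ Z), A k l * bh l := by
              refine Finset.sum_le_sum fun l _ => ?_
              rw [mul_comm (bh l)]
              exact mul_le_mul_of_nonneg_right (hAmR k l) (bhs.1 l)
      rw [heq, div_lt_iff₀ h1s]
      have h3 : 0 ≤ s * (mplus p r x - (a' + ε)) :=
        mul_nonneg hs0 (by linarith)
      nlinarith
    rw [payoff_eq_rows]
    have hpos : ∃ k, 0 < αt k := by
      by_contra h
      push_neg at h
      have hzero : ∀ k, αt k = 0 := fun k => le_antisymm (h k) (hαt.1 k)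
      have : ∑ k, αt k = 0 := Finset.sum_eq_zero fun k _ => hzero k
      rw [hαt.2] at this
      norm_num at this
    obtain ⟨k₀, hk₀⟩ := hpos
    calc ∑ k, αt k * ∑ l, A k l * (if l ∈ Z then (0:ℝ) else bh l / (1 - s))
        < ∑ k, αt k * (a' + ε) := by
          refine Finset.sum_lt_sum (fun k _ =>
            mul_le_mul_of_nonneg_left (le_of_lt (hrow k)) (hαt.1 k))
            ⟨k₀, Finset.mem_univ k₀, mul_lt_mul_of_pos_left (hrow k₀) hk₀⟩
      _ = a' + ε := by rw [← Finset.sum_mul, hαt.2, one_mul]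



end Decomp2

/-- the constructive non-ergodicity criterion. Under conditions
(N4), (N5), (N6) there exist local strategies on `I` and `F` satisfying (N1),
(N2) and (N3) with `b = b' − ε` and `a = a' + ε`. -/
theorem constructive_non_ergodicity
    (p r : ∀ v : V, K v → L v → V → ℝ)
    (hp0 : ∀ v k l u, 0 ≤ p v k l u) (hp1 : ∀ v k l, ∑ u, p v k l u = 1)
    (hr0 : ∀ v k l u, 0 ≤ r v k l u)
    (W : ℝ) (hW : 0 < W) (hpW : ∀ v k l u, p v k l u ≠ 0 → 1 / W ≤ p v k l u)
    (ε : ℝ) (hε : 0 < ε) (x : V → ℝ)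
    (I F : Set V) (hIne : I.Nonempty) (hFne : F.Nonempty) (hIF : Disjoint I F)
    (a' b' : ℝ) (ha'0 : 0 ≤ a') (ha'le : a' ≤ mplus p r x)
    (hb'0 : 0 ≤ b') (hb'le : b' ≤ mplus p r x)
    (hgap : 3 * ε ≤ b' - a')
    (ha'mid : a' < (mplus p r x + mminus p r x) / 2)
    (hb'mid : (mplus p r x + mminus p r x) / 2 ≤ b')
    (hN4a : ∀ v ∈ I, b' ≤ locVal p r x v)
    (hN4b : ∀ u ∈ F, locVal p r x u < a')
    (hN5 : ∀ u ∉ I, ∀ v ∈ I,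
      (Fintype.card (L v) : ℝ) * W * (Rval p r x v) ^ 2 / ε ≤ x u - x v)
    (hN6 : ∀ u ∈ F, ∀ v ∉ F,
      (Fintype.card (K u) : ℝ) * W * (Rval p r x u) ^ 2 / ε ≤ x u - x v) :
    ∃ (α : ∀ v, K v → ℝ) (β : ∀ v, L v → ℝ),
      (∀ v ∈ I, α v ∈ stdSimplex ℝ (K v)) ∧
      (∀ u ∈ F, β u ∈ stdSimplex ℝ (L u)) ∧
      (∀ v ∈ I, ∀ u ∉ I, ∀ k l, α v k * p v k l u = 0) ∧
      (∀ u ∈ F, ∀ w ∉ F, ∀ k l, β u l * p u k l w = 0) ∧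
      (∀ v ∈ I, ∀ βt ∈ stdSimplex ℝ (L v),
        b' - ε ≤ ∑ k, ∑ l, α v k * locMat p r x v k l * βt l) ∧
      (∀ u ∈ F, ∀ αt ∈ stdSimplex ℝ (K u),
        ∑ k, ∑ l, αt k * locMat p r x u k l * β u l < a' + ε) := by
  classical
  have hIex := exists_good_I p r hp0 W hW hpW ε hε x I a' b' ha'0 hgap hb'mid hN4a hN5
  have hFex := exists_good_F p r hp0 W hW hpW ε hε x F a' b' ha'le hb'le hgap ha'mid hN4b hN6
  choose α hα using hIex
  choose β hβ using hFex
  exact ⟨α, β, fun v hv => (hα v hv).1, fun u hu => (hβ u hu).1,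
    fun v hv => (hα v hv).2.1, fun u hu => (hβ u hu).2.1,
    fun v hv => (hα v hv).2.2, fun u hu => (hβ u hu).2.2⟩
end

section
/- Let Γ be a stochastic game, x ∈ ℝ^V a potential vector, m ∈ ℝ, and α a stationary strategy of player 1 such that min_{β̃∈Δ(L^v)} (α^v)ᵀ A^v(x) β̃ ≥ m for every v ∈ V. Then for every stationary strategy β' of player 2 and every initial position v ∈ V: g^v(α, β') ≥ m. Symmetrically, if β is a stationary strategy of player 2 with max_{α̃∈Δ(K^v)} α̃ᵀ A^v(x) β^v ≤ m for every v ∈ V, then g^v(α', β) ≤ m for every stationary strategy α' of player 1 and every v ∈ V. -/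
open Filter Matrix

variable {V : Type*} [Fintype V] [DecidableEq V] [Nonempty V]
  {K L : V → Type*} [∀ v, Fintype (K v)] [∀ v, Nonempty (K v)]
  [∀ v, Fintype (L v)] [∀ v, Nonempty (L v)]

set_option linter.unusedSectionVars false

set_option maxHeartbeats 1000000


lemma Qpow_nonneg (Q : Matrix V V ℝ) (hQ : ∀ v u, 0 ≤ Q v u) (n : ℕ) :
    ∀ v u, 0 ≤ (Q ^ n) v u := by
  induction n with
  | zero => intro v u; rw [pow_zero, Matrix.one_apply]; positivity
  | succ n ih =>
    intro v u
    rw [pow_succ, Matrix.mul_apply]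
    exact Finset.sum_nonneg fun w _ => mul_nonneg (ih v w) (hQ w u)

lemma Qpow_rowsum (Q : Matrix V V ℝ) (hQ : ∀ v, ∑ u, Q v u = 1) (n : ℕ) :
    ∀ v, ∑ u, (Q ^ n) v u = 1 := by
  induction n with
  | zero => intro v; simp [pow_zero, Matrix.one_apply]
  | succ n ih =>
    intro v
    simp only [pow_succ, Matrix.mul_apply]
    rw [Finset.sum_comm]
    simp only [← Finset.mul_sum, hQ, mul_one, ih]

lemma step_ineq (Q : Matrix V V ℝ) (hQ0 : ∀ v u, 0 ≤ Q v u)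
    (hQ1 : ∀ v, ∑ u, Q v u = 1) (c x : V → ℝ) (m : ℝ)
    (hc : ∀ v, m + Q.mulVec x v - x v ≤ c v) (n : ℕ) (v : V) :
    m + ((Q ^ (n + 1)).mulVec x) v - ((Q ^ n).mulVec x) v ≤ ((Q ^ n).mulVec c) v := by
  have h1 : ((Q ^ (n + 1)).mulVec x) v = ∑ u, (Q ^ n) v u * ((Q.mulVec x) u) := by
    rw [pow_succ, ← Matrix.mulVec_mulVec]
    simp [Matrix.mulVec, dotProduct]
  have h2 : ((Q ^ n).mulVec x) v = ∑ u, (Q ^ n) v u * x u := by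
    simp [Matrix.mulVec, dotProduct]
  have h3 : ((Q ^ n).mulVec c) v = ∑ u, (Q ^ n) v u * c u := by
    simp [Matrix.mulVec, dotProduct]
  have key : ∑ u, (Q ^ n) v u * (m + Q.mulVec x u - x u) ≤ ∑ u, (Q ^ n) v u * c u :=
    Finset.sum_le_sum fun u _ =>
      mul_le_mul_of_nonneg_left (hc u) (Qpow_nonneg Q hQ0 n v u)
  have expand : ∑ u, (Q ^ n) v u * (m + Q.mulVec x u - x u)
      = m + ((Q ^ (n + 1)).mulVec x) v - ((Q ^ n).mulVec x) v := by
    rw [h1, h2]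
    simp only [mul_add, mul_sub, Finset.sum_add_distrib, Finset.sum_sub_distrib,
      ← Finset.sum_mul, Qpow_rowsum Q hQ1 n v, one_mul]
  rw [h3, ← expand]; exact key

lemma telescope (Q : Matrix V V ℝ) (hQ0 : ∀ v u, 0 ≤ Q v u)
    (hQ1 : ∀ v, ∑ u, Q v u = 1) (c x : V → ℝ) (m : ℝ)
    (hc : ∀ v, m + Q.mulVec x v - x v ≤ c v) (N : ℕ) (v : V) :
    (N + 1 : ℝ) * m + ((Q ^ (N + 1)).mulVec x) v - x v
      ≤ ∑ j ∈ Finset.range (N + 1), ((Q ^ j).mulVec c) v := by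
  induction N with
  | zero =>
    have h0 : ∑ j ∈ Finset.range (0 + 1), ((Q ^ j).mulVec c) v = c v := by
      simp [Matrix.one_mulVec]
    rw [h0, pow_one]
    push_cast
    linarith [hc v]
  | succ N ih =>
    rw [Finset.sum_range_succ]
    have := step_ineq Q hQ0 hQ1 c x m hc (N + 1) v
    push_cast
    push_cast at ih
    linarith

lemma xbound (Q : Matrix V V ℝ) (hQ0 : ∀ v u, 0 ≤ Q v u)
    (hQ1 : ∀ v, ∑ u, Q v u = 1) (x : V → ℝ) (n : ℕ) (w : V) :
    |((Q ^ n).mulVec x) w| ≤ ∑ u, |x u| := by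
  have h : ((Q ^ n).mulVec x) w = ∑ u, (Q ^ n) w u * x u := by
    simp [Matrix.mulVec, dotProduct]
  rw [h]
  calc |∑ u, (Q ^ n) w u * x u| ≤ ∑ u, |(Q ^ n) w u * x u| :=
        Finset.abs_sum_le_sum_abs _ _
    _ ≤ ∑ u, |x u| := by
        refine Finset.sum_le_sum fun u _ => ?_
        rw [abs_mul, abs_of_nonneg (Qpow_nonneg Q hQ0 n w u)]
        have hle1 : (Q ^ n) w u ≤ 1 := by
          rw [← Qpow_rowsum Q hQ1 n w]
          exact Finset.single_le_sum (fun u' _ => Qpow_nonneg Q hQ0 n w u')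
            (Finset.mem_univ u)
        nlinarith [abs_nonneg (x u)]

lemma core_lower (Q : Matrix V V ℝ) (hQ0 : ∀ v u, 0 ≤ Q v u)
    (hQ1 : ∀ v, ∑ u, Q v u = 1) (c x : V → ℝ) (m : ℝ)
    (hc : ∀ v, m + Q.mulVec x v - x v ≤ c v) (v : V) :
    m ≤ liminf (fun N : ℕ => (1 / (N + 1 : ℝ)) * ∑ j ∈ Finset.range (N + 1),
      ((Q ^ j).mulVec c) v) atTop := by
  set M := ∑ u, |x u| with hM
  have hM0 : 0 ≤ M := Finset.sum_nonneg fun u _ => abs_nonneg _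
  have hxv : |x v| ≤ M :=
    Finset.single_le_sum (fun u _ => abs_nonneg (x u)) (Finset.mem_univ v)
  have hfg : ∀ N : ℕ, m - 2 * M / ((N : ℝ) + 1)
      ≤ (1 / (N + 1 : ℝ)) * ∑ j ∈ Finset.range (N + 1), ((Q ^ j).mulVec c) v := by
    intro N
    have hN : (0 : ℝ) < (N : ℝ) + 1 := by positivity
    have h1 : ((N : ℝ) + 1) * m - 2 * M
        ≤ ∑ j ∈ Finset.range (N + 1), ((Q ^ j).mulVec c) v := by
      have ht := telescope Q hQ0 hQ1 c x m hc N v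
      have hb := abs_le.mp (xbound Q hQ0 hQ1 x (N + 1) v)
      have hb2 := abs_le.mp hxv
      push_cast at ht
      linarith [hb.1, hb2.2]
    calc m - 2 * M / ((N : ℝ) + 1)
        = (1 / ((N : ℝ) + 1)) * (((N : ℝ) + 1) * m - 2 * M) := by
          field_simp
      _ ≤ (1 / (N + 1 : ℝ)) * ∑ j ∈ Finset.range (N + 1), ((Q ^ j).mulVec c) v :=
          mul_le_mul_of_nonneg_left h1 (by positivity)
  have hg : Tendsto (fun N : ℕ => m - 2 * M / ((N : ℝ) + 1)) atTop (nhds m) := by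
    have h0 : Tendsto (fun N : ℕ => 2 * M * (1 / ((N : ℝ) + 1))) atTop (nhds 0) := by
      simpa using tendsto_one_div_add_atTop_nhds_zero_nat.const_mul (2 * M)
    have h2 := (tendsto_const_nhds (α := ℕ) (f := atTop) (x := m)).sub h0
    simpa [mul_one_div, div_eq_mul_inv] using h2
  have hub : ∀ N : ℕ, (1 / (N + 1 : ℝ)) * ∑ j ∈ Finset.range (N + 1),
      ((Q ^ j).mulVec c) v ≤ ∑ u, |c u| := by
    intro N
    have hN : (0 : ℝ) < (N : ℝ) + 1 := by positivity
    have h1 : ∑ j ∈ Finset.range (N + 1), ((Q ^ j).mulVec c) v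
        ≤ ((N : ℝ) + 1) * ∑ u, |c u| := by
      have := Finset.sum_le_sum (f := fun j => ((Q ^ j).mulVec c) v)
        (g := fun _ => ∑ u, |c u|) (s := Finset.range (N + 1))
        (fun j _ => (abs_le.mp (xbound Q hQ0 hQ1 c j v)).2)
      simpa [Finset.sum_const, Finset.card_range, mul_comm] using this
    calc (1 / (N + 1 : ℝ)) * ∑ j ∈ Finset.range (N + 1), ((Q ^ j).mulVec c) v
        ≤ (1 / (N + 1 : ℝ)) * (((N : ℝ) + 1) * ∑ u, |c u|) :=
          mul_le_mul_of_nonneg_left h1 (by positivity)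
      _ = ∑ u, |c u| := by field_simp
  rw [← hg.liminf_eq]
  refine liminf_le_liminf (Eventually.of_forall hfg) hg.isBoundedUnder_ge ?_
  exact IsBoundedUnder.isCoboundedUnder_ge (isBoundedUnder_of ⟨∑ u, |c u|, hub⟩)

lemma step_ineq' (Q : Matrix V V ℝ) (hQ0 : ∀ v u, 0 ≤ Q v u)
    (hQ1 : ∀ v, ∑ u, Q v u = 1) (c x : V → ℝ) (m : ℝ)
    (hc : ∀ v, c v ≤ m + Q.mulVec x v - x v) (n : ℕ) (v : V) :
    ((Q ^ n).mulVec c) v ≤ m + ((Q ^ (n + 1)).mulVec x) v - ((Q ^ n).mulVec x) v := by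
  have h1 : ((Q ^ (n + 1)).mulVec x) v = ∑ u, (Q ^ n) v u * ((Q.mulVec x) u) := by
    rw [pow_succ, ← Matrix.mulVec_mulVec]
    simp [Matrix.mulVec, dotProduct]
  have h2 : ((Q ^ n).mulVec x) v = ∑ u, (Q ^ n) v u * x u := by
    simp [Matrix.mulVec, dotProduct]
  have h3 : ((Q ^ n).mulVec c) v = ∑ u, (Q ^ n) v u * c u := by
    simp [Matrix.mulVec, dotProduct]
  have key : ∑ u, (Q ^ n) v u * c u ≤ ∑ u, (Q ^ n) v u * (m + Q.mulVec x u - x u) :=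
    Finset.sum_le_sum fun u _ =>
      mul_le_mul_of_nonneg_left (hc u) (Qpow_nonneg Q hQ0 n v u)
  have expand : ∑ u, (Q ^ n) v u * (m + Q.mulVec x u - x u)
      = m + ((Q ^ (n + 1)).mulVec x) v - ((Q ^ n).mulVec x) v := by
    rw [h1, h2]
    simp only [mul_add, mul_sub, Finset.sum_add_distrib, Finset.sum_sub_distrib,
      ← Finset.sum_mul, Qpow_rowsum Q hQ1 n v, one_mul]
  rw [h3, ← expand]; exact key

lemma telescope' (Q : Matrix V V ℝ) (hQ0 : ∀ v u, 0 ≤ Q v u)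
    (hQ1 : ∀ v, ∑ u, Q v u = 1) (c x : V → ℝ) (m : ℝ)
    (hc : ∀ v, c v ≤ m + Q.mulVec x v - x v) (N : ℕ) (v : V) :
    ∑ j ∈ Finset.range (N + 1), ((Q ^ j).mulVec c) v
      ≤ (N + 1 : ℝ) * m + ((Q ^ (N + 1)).mulVec x) v - x v := by
  induction N with
  | zero =>
    have h0 : ∑ j ∈ Finset.range (0 + 1), ((Q ^ j).mulVec c) v = c v := by
      simp [Matrix.one_mulVec]
    rw [h0, pow_one]
    push_cast
    linarith [hc v]
  | succ N ih =>
    rw [Finset.sum_range_succ]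
    have := step_ineq' Q hQ0 hQ1 c x m hc (N + 1) v
    push_cast
    push_cast at ih
    linarith

lemma core_upper (Q : Matrix V V ℝ) (hQ0 : ∀ v u, 0 ≤ Q v u)
    (hQ1 : ∀ v, ∑ u, Q v u = 1) (c x : V → ℝ) (m : ℝ)
    (hc : ∀ v, c v ≤ m + Q.mulVec x v - x v) (v : V) :
    liminf (fun N : ℕ => (1 / (N + 1 : ℝ)) * ∑ j ∈ Finset.range (N + 1),
      ((Q ^ j).mulVec c) v) atTop ≤ m := by
  set M := ∑ u, |x u| with hM
  have hM0 : 0 ≤ M := Finset.sum_nonneg fun u _ => abs_nonneg _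
  have hxv : |x v| ≤ M :=
    Finset.single_le_sum (fun u _ => abs_nonneg (x u)) (Finset.mem_univ v)
  have hfg : ∀ N : ℕ, (1 / (N + 1 : ℝ)) * ∑ j ∈ Finset.range (N + 1),
      ((Q ^ j).mulVec c) v ≤ m + 2 * M / ((N : ℝ) + 1) := by
    intro N
    have hN : (0 : ℝ) < (N : ℝ) + 1 := by positivity
    have h1 : ∑ j ∈ Finset.range (N + 1), ((Q ^ j).mulVec c) v
        ≤ ((N : ℝ) + 1) * m + 2 * M := by
      have ht := telescope' Q hQ0 hQ1 c x m hc N v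
      have hb := abs_le.mp (xbound Q hQ0 hQ1 x (N + 1) v)
      have hb2 := abs_le.mp hxv
      push_cast at ht
      linarith [hb.2, hb2.1]
    calc (1 / (N + 1 : ℝ)) * ∑ j ∈ Finset.range (N + 1), ((Q ^ j).mulVec c) v
        ≤ (1 / ((N : ℝ) + 1)) * (((N : ℝ) + 1) * m + 2 * M) :=
          mul_le_mul_of_nonneg_left h1 (by positivity)
      _ = m + 2 * M / ((N : ℝ) + 1) := by field_simp
  have hg : Tendsto (fun N : ℕ => m + 2 * M / ((N : ℝ) + 1)) atTop (nhds m) := by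
    have h0 : Tendsto (fun N : ℕ => 2 * M * (1 / ((N : ℝ) + 1))) atTop (nhds 0) := by
      simpa using tendsto_one_div_add_atTop_nhds_zero_nat.const_mul (2 * M)
    have h2 := (tendsto_const_nhds (α := ℕ) (f := atTop) (x := m)).add h0
    simpa [mul_one_div, div_eq_mul_inv] using h2
  have hlb : ∀ N : ℕ, -(∑ u, |c u|) ≤ (1 / (N + 1 : ℝ)) * ∑ j ∈ Finset.range (N + 1),
      ((Q ^ j).mulVec c) v := by
    intro N
    have hN : (0 : ℝ) < (N : ℝ) + 1 := by positivity
    have h1 : ((N : ℝ) + 1) * (-(∑ u, |c u|))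
        ≤ ∑ j ∈ Finset.range (N + 1), ((Q ^ j).mulVec c) v := by
      have := Finset.sum_le_sum (f := fun _ : ℕ => -(∑ u, |c u|))
        (g := fun j => ((Q ^ j).mulVec c) v) (s := Finset.range (N + 1))
        (fun j _ => (abs_le.mp (xbound Q hQ0 hQ1 c j v)).1)
      simpa [Finset.sum_const, Finset.card_range, mul_comm] using this
    calc -(∑ u, |c u|) = (1 / ((N : ℝ) + 1)) * (((N : ℝ) + 1) * (-(∑ u, |c u|))) := by
          field_simp
      _ ≤ (1 / (N + 1 : ℝ)) * ∑ j ∈ Finset.range (N + 1), ((Q ^ j).mulVec c) v :=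
          mul_le_mul_of_nonneg_left h1 (by positivity)
  rw [← hg.liminf_eq]
  exact liminf_le_liminf (Eventually.of_forall hfg)
    (isBoundedUnder_of ⟨-(∑ u, |c u|), hlb⟩) hg.isCoboundedUnder_ge


lemma Qmat_nonneg (p : ∀ v : V, K v → L v → V → ℝ) (hp0 : ∀ v k l u, 0 ≤ p v k l u)
    (α : ∀ v, K v → ℝ) (β : ∀ v, L v → ℝ)
    (hα : ∀ v, α v ∈ stdSimplex ℝ (K v)) (hβ : ∀ v, β v ∈ stdSimplex ℝ (L v)) :
    ∀ v u, 0 ≤ Qmat p α β v u := by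
  intro v u
  refine Finset.sum_nonneg fun k _ => Finset.sum_nonneg fun l _ => ?_
  exact mul_nonneg (mul_nonneg ((hα v).1 k) ((hβ v).1 l)) (hp0 v k l u)

lemma sum_simplex_prod (α : ∀ v, K v → ℝ) (β : ∀ v, L v → ℝ)
    (hα : ∀ v, α v ∈ stdSimplex ℝ (K v)) (hβ : ∀ v, β v ∈ stdSimplex ℝ (L v)) (v : V) :
    ∑ k, ∑ l, α v k * β v l = 1 := by
  rw [← Finset.sum_mul_sum, (hα v).2, (hβ v).2, mul_one]

lemma Qmat_rowsum (p : ∀ v : V, K v → L v → V → ℝ) (hp1 : ∀ v k l, ∑ u, p v k l u = 1)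
    (α : ∀ v, K v → ℝ) (β : ∀ v, L v → ℝ)
    (hα : ∀ v, α v ∈ stdSimplex ℝ (K v)) (hβ : ∀ v, β v ∈ stdSimplex ℝ (L v)) :
    ∀ v, ∑ u, Qmat p α β v u = 1 := by
  intro v
  simp only [Qmat, Matrix.of_apply]
  calc ∑ u, ∑ k, ∑ l, α v k * β v l * p v k l u
      = ∑ k, ∑ u, ∑ l, α v k * β v l * p v k l u := Finset.sum_comm
    _ = ∑ k, ∑ l, ∑ u, α v k * β v l * p v k l u :=
        Finset.sum_congr rfl fun k _ => Finset.sum_comm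
    _ = ∑ k, ∑ l, α v k * β v l := by
        refine Finset.sum_congr rfl fun k _ => Finset.sum_congr rfl fun l _ => ?_
        rw [← Finset.mul_sum, hp1, mul_one]
    _ = 1 := sum_simplex_prod α β hα hβ v

lemma bilin_eq (p r : ∀ v : V, K v → L v → V → ℝ) (hp1 : ∀ v k l, ∑ u, p v k l u = 1)
    (x : V → ℝ) (α : ∀ v, K v → ℝ) (β : ∀ v, L v → ℝ)
    (hα : ∀ v, α v ∈ stdSimplex ℝ (K v)) (hβ : ∀ v, β v ∈ stdSimplex ℝ (L v)) (v : V) :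
    ∑ k, ∑ l, α v k * locMat p r x v k l * β v l
      = cvec p r α β v + x v - (Qmat p α β).mulVec x v := by
  have hA : ∀ k l, locMat p r x v k l
      = (∑ u, p v k l u * r v k l u) + x v - ∑ u, p v k l u * x u := by
    intro k l
    simp only [locMat, Matrix.of_apply]
    have he : ∀ u ∈ Finset.univ, p v k l u * (r v k l u + x v - x u)
        = p v k l u * r v k l u + p v k l u * x v - p v k l u * x u :=
      fun u _ => by ring
    rw [Finset.sum_congr rfl he, Finset.sum_sub_distrib, Finset.sum_add_distrib,
      ← Finset.sum_mul, hp1, one_mul]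
  have hQ : (Qmat p α β).mulVec x v
      = ∑ k, ∑ l, α v k * β v l * ∑ u, p v k l u * x u := by
    simp only [Qmat, Matrix.mulVec, dotProduct, Matrix.of_apply]
    calc ∑ u, (∑ k, ∑ l, α v k * β v l * p v k l u) * x u
        = ∑ u, ∑ k, ∑ l, α v k * β v l * (p v k l u * x u) := by
          refine Finset.sum_congr rfl fun u _ => ?_
          rw [Finset.sum_mul]
          refine Finset.sum_congr rfl fun k _ => ?_
          rw [Finset.sum_mul]
          exact Finset.sum_congr rfl fun l _ => by ring
      _ = ∑ k, ∑ u, ∑ l, α v k * β v l * (p v k l u * x u) := Finset.sum_comm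
      _ = ∑ k, ∑ l, ∑ u, α v k * β v l * (p v k l u * x u) :=
          Finset.sum_congr rfl fun k _ => Finset.sum_comm
      _ = ∑ k, ∑ l, α v k * β v l * ∑ u, p v k l u * x u := by
          refine Finset.sum_congr rfl fun k _ => Finset.sum_congr rfl fun l _ => ?_
          rw [Finset.mul_sum]
  calc ∑ k, ∑ l, α v k * locMat p r x v k l * β v l
      = ∑ k, ∑ l, (α v k * β v l * (∑ u, p v k l u * r v k l u)
          + (α v k * β v l) * x v
          - α v k * β v l * (∑ u, p v k l u * x u)) := by
        refine Finset.sum_congr rfl fun k _ => Finset.sum_congr rfl fun l _ => ?_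
        rw [hA k l]; ring
    _ = cvec p r α β v + (∑ k, ∑ l, α v k * β v l) * x v
          - (Qmat p α β).mulVec x v := by
        rw [hQ]
        simp only [Finset.sum_sub_distrib, Finset.sum_add_distrib, ← Finset.sum_mul]
        rfl
    _ = cvec p r α β v + x v - (Qmat p α β).mulVec x v := by
        rw [sum_simplex_prod α β hα hβ v, one_mul]

/-- if a stationary strategy `α` of player 1 guarantees at least
`m` in every transformed local game `A^v(x)`, then it guarantees a limiting
average payoff of at least `m` from every initial position against every
stationary strategy of player 2; and symmetrically for player 2. -/
theorem locally_guaranteeing_implies_globally_guaranteeing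
    (p r : ∀ v : V, K v → L v → V → ℝ)
    (hp0 : ∀ v k l u, 0 ≤ p v k l u) (hp1 : ∀ v k l, ∑ u, p v k l u = 1)
    (x : V → ℝ) (m : ℝ) :
    ((∀ α : ∀ v, K v → ℝ, (∀ v, α v ∈ stdSimplex ℝ (K v)) →
      (∀ v, ∀ βt ∈ stdSimplex ℝ (L v),
        m ≤ ∑ k, ∑ l, α v k * locMat p r x v k l * βt l) →
      ∀ β' : ∀ v, L v → ℝ, (∀ v, β' v ∈ stdSimplex ℝ (L v)) →
        ∀ v, m ≤ gval p r α β' v)) ∧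
    ((∀ β : ∀ v, L v → ℝ, (∀ v, β v ∈ stdSimplex ℝ (L v)) →
      (∀ v, ∀ αt ∈ stdSimplex ℝ (K v),
        ∑ k, ∑ l, αt k * locMat p r x v k l * β v l ≤ m) →
      ∀ α' : ∀ v, K v → ℝ, (∀ v, α' v ∈ stdSimplex ℝ (K v)) →
        ∀ v, gval p r α' β v ≤ m)) := by
  constructor
  · intro α hα hloc β' hβ' v
    have hQ0 := Qmat_nonneg p hp0 α β' hα hβ'
    have hQ1 := Qmat_rowsum p hp1 α β' hα hβ'
    have hc : ∀ w, m + (Qmat p α β').mulVec x w - x w ≤ cvec p r α β' w := by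
      intro w
      have h := hloc w (β' w) (hβ' w)
      rw [bilin_eq p r hp1 x α β' hα hβ' w] at h
      linarith
    exact core_lower _ hQ0 hQ1 _ x m hc v
  · intro β hβ hloc α' hα' v
    have hQ0 := Qmat_nonneg p hp0 α' β hα' hβ
    have hQ1 := Qmat_rowsum p hp1 α' β hα' hβ
    have hc : ∀ w, cvec p r α' β w ≤ m + (Qmat p α' β).mulVec x w - x w := by
      intro w
      have h := hloc w (α' w) (hα' w)
      rw [bilin_eq p r hp1 x α' β hα' hβ w] at h
      linarith
    exact core_upper _ hQ0 hQ1 _ x m hc v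
end
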